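/- arXiv:math/9908084 — 5 statements merged into one kernel-verified Lean document; each statement's English description precedes it below -/
import Mathlib

section
/- Let S be a separable metric space, ρ a Borel probability law on S, and for each n let ρ_n be a symmetric Borel probability law on S^n. If for every pair of bounded continuous functions φ₁, φ₂ on S the integral of φ₁(s₁)φ₂(s₂) against ρ_n converges to (∫φ₁ dρ)(∫φ₂ dρ) as n → ∞, then for every k and every choice of bounded continuous functions φ₁,…,φ_k on S, the integral of φ₁(s₁)⋯φ_k(s_k) against ρ_n converges to ∏_{i=1}^k ∫φ_i dρ. -/
open MeasureTheory Filter Topology BoundedContinuousFunction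
open scoped ENNReal NNReal
noncomputable section
variable {S : Type*}

instance secondCountable_of_sep [PseudoMetricSpace S] [TopologicalSpace.SeparableSpace S] :
    SecondCountableTopology S := UniformSpace.secondCountable_of_separable S

instance [MeasurableSpace S] : MeasurableSpace (ProbabilityMeasure S) :=
  Subtype.instMeasurableSpace

def empMeasure [MeasurableSpace S] {n : ℕ} (s : Fin n → S) : Measure S :=
  (n : ℝ≥0∞)⁻¹ • ∑ i : Fin n, Measure.dirac (s i)

instance [MeasurableSpace S] {n : ℕ} [NeZero n] (s : Fin n → S) :
    IsProbabilityMeasure (empMeasure s) := by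
  constructor
  simp only [empMeasure, Measure.smul_apply, Measure.finset_sum_apply, measure_univ,
    Finset.sum_const, Finset.card_univ, Fintype.card_fin, smul_eq_mul, nsmul_eq_mul, mul_one]
  exact ENNReal.inv_mul_cancel (by exact_mod_cast NeZero.ne n) (by simp)

def empirical [MeasurableSpace S] {n : ℕ} [NeZero n] (s : Fin n → S) :
    ProbabilityMeasure S := ⟨empMeasure s, inferInstance⟩

def IsSymmetric [MeasurableSpace S] {n : ℕ} (ρ : Measure (Fin n → S)) : Prop :=
  ∀ π : Equiv.Perm (Fin n), ρ.map (fun s i => s (π i)) = ρ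

def IsChaotic [MeasurableSpace S] [TopologicalSpace S]
    (ρs : ∀ n, Measure (Fin n → S)) (p : Measure S) : Prop :=
  ∀ (k : ℕ) (φ : Fin k → (S →ᵇ ℝ)),
    Tendsto (fun n => ∫ s, ∏ i : Fin k, (if h : (i : ℕ) < n then φ i (s ⟨i, h⟩) else 1) ∂ ρs n)
      atTop (𝓝 (∏ i : Fin k, ∫ x, φ i x ∂ p))

def symmetrize [MeasurableSpace S] {n : ℕ} (ρ : Measure (Fin n → S)) : Measure (Fin n → S) :=
  ((Nat.factorial n : ℝ≥0∞))⁻¹ • ∑ π : Equiv.Perm (Fin n), ρ.map (fun s i => s (π i))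

def WeakTendsto {X : Type*} [MeasurableSpace X] [TopologicalSpace X]
    (μ : ℕ → Measure X) (ν : Measure X) : Prop :=
  ∀ φ : X →ᵇ ℝ, Tendsto (fun n => ∫ x, φ x ∂ μ n) atTop (𝓝 (∫ x, φ x ∂ ν))

def marginal [MeasurableSpace S] {k n : ℕ} (h : k ≤ n) (ρ : Measure (Fin n → S)) :
    Measure (Fin k → S) := ρ.map (fun s i => s (Fin.castLE h i))


set_option linter.unusedSectionVars false
set_option maxHeartbeats 1000000

section SznitmanAux

-- general lemmas (no S structure needed)
lemma abs_prod_sub_prod_le {ι : Type*} [DecidableEq ι] (s : Finset ι) (f g M : ι → ℝ)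
    (hf : ∀ i ∈ s, |f i| ≤ M i) (hg : ∀ i ∈ s, |g i| ≤ M i) :
    |∏ i ∈ s, f i - ∏ i ∈ s, g i| ≤ ∑ i ∈ s, (∏ l ∈ s.erase i, M l) * |f i - g i| := by
  induction s using Finset.cons_induction with
  | empty => simp
  | cons a t ha ih =>
    have hM : ∀ i ∈ t, 0 ≤ M i := fun i hi => (abs_nonneg _).trans (hf i (Finset.mem_cons_of_mem hi))
    have hMa : 0 ≤ M a := (abs_nonneg _).trans (hf a (Finset.mem_cons_self a t))
    rw [Finset.prod_cons, Finset.prod_cons, Finset.sum_cons]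
    have key : f a * ∏ i ∈ t, f i - g a * ∏ i ∈ t, g i
        = (f a - g a) * ∏ i ∈ t, f i + g a * (∏ i ∈ t, f i - ∏ i ∈ t, g i) := by ring
    rw [key]
    refine (abs_add_le _ _).trans (add_le_add ?_ ?_)
    · rw [abs_mul, mul_comm, Finset.erase_cons]
      have hpf : |∏ i ∈ t, f i| ≤ ∏ l ∈ t, M l := by
        rw [Finset.abs_prod]
        exact Finset.prod_le_prod (fun i _ => abs_nonneg _)
          (fun i hi => hf i (Finset.mem_cons_of_mem hi))
      exact mul_le_mul_of_nonneg_right hpf (abs_nonneg _)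
    · rw [abs_mul]
      have ihh := ih (fun i hi => hf i (Finset.mem_cons_of_mem hi))
        (fun i hi => hg i (Finset.mem_cons_of_mem hi))
      calc |g a| * |∏ i ∈ t, f i - ∏ i ∈ t, g i|
          ≤ M a * ∑ i ∈ t, (∏ l ∈ t.erase i, M l) * |f i - g i| := by
            have hga : |g a| ≤ M a := hg a (Finset.mem_cons_self a t)
            have hnn : 0 ≤ ∑ i ∈ t, (∏ l ∈ t.erase i, M l) * |f i - g i| := by
              refine Finset.sum_nonneg fun i hi => mul_nonneg ?_ (abs_nonneg _)
              exact Finset.prod_nonneg fun l hl => hM l (Finset.mem_of_mem_erase hl)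
            exact mul_le_mul hga ihh (abs_nonneg _) ((abs_nonneg _).trans hga)
        _ = ∑ i ∈ t, (∏ l ∈ (Finset.cons a t ha).erase i, M l) * |f i - g i| := by
            rw [Finset.mul_sum]
            refine Finset.sum_congr rfl fun i hi => ?_
            have hne : a ≠ i := fun h => ha (h ▸ hi)
            rw [Finset.erase_cons_of_ne ha hne, Finset.prod_cons, mul_assoc]

lemma card_filter_injective (k n : ℕ) :
    (Finset.univ.filter (fun j : Fin k → Fin n => Function.Injective j)).card
      = n.descFactorial k := by
  classical
  rw [← Fintype.card_subtype]
  rw [Fintype.card_congr (Equiv.subtypeInjectiveEquivEmbedding (Fin k) (Fin n))]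
  rw [Fintype.card_embedding_eq, Fintype.card_fin, Fintype.card_fin]

lemma tendsto_descFactorial_ratio (k : ℕ) :
    Filter.Tendsto (fun n : ℕ => (n.descFactorial k : ℝ) / (n : ℝ) ^ k)
      Filter.atTop (nhds 1) := by
  have h : ∀ᶠ n : ℕ in Filter.atTop,
      (∏ i ∈ Finset.range k, (1 - (i : ℝ) / n)) = (n.descFactorial k : ℝ) / (n : ℝ) ^ k := by
    filter_upwards [Filter.eventually_ge_atTop (max k 1)] with n hn
    have hk : k ≤ n := le_trans (le_max_left _ _) hn
    have hn1 : (1 : ℕ) ≤ n := le_trans (le_max_right _ _) hn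
    have hn0 : (n : ℝ) ≠ 0 := by positivity
    rw [Nat.descFactorial_eq_prod_range]
    push_cast
    have : ((n : ℝ) ^ k) = ∏ i ∈ Finset.range k, (n : ℝ) := by
      rw [Finset.prod_const, Finset.card_range]
    rw [this, ← Finset.prod_div_distrib]
    refine Finset.prod_congr rfl fun i hi => ?_
    have hik : i < k := Finset.mem_range.mp hi
    rw [Nat.cast_sub (le_of_lt (lt_of_lt_of_le hik hk))]
    field_simp
  refine Filter.Tendsto.congr' h ?_
  have : Filter.Tendsto (fun n : ℕ => ∏ i ∈ Finset.range k, (1 - (i : ℝ) / n))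
      Filter.atTop (nhds (∏ i ∈ Finset.range k, (1 : ℝ))) := by
    refine tendsto_finset_prod _ fun i _ => ?_
    have := tendsto_const_div_atTop_nhds_zero_nat (i : ℝ)
    simpa using (tendsto_const_nhds (x := (1:ℝ))).sub this
  simpa using this

lemma sq_integral_abs_le {α : Type*} [MeasurableSpace α] (μ : Measure α)
    [IsProbabilityMeasure μ] (Z : α → ℝ) (hZ : Measurable Z) (C : ℝ) (hC : ∀ x, |Z x| ≤ C) :
    (∫ x, |Z x| ∂μ) ^ 2 ≤ ∫ x, (Z x) ^ 2 ∂μ := by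
  set a := ∫ x, |Z x| ∂μ with ha
  have hZi : Integrable Z μ :=
    (integrable_const C).mono' hZ.aestronglyMeasurable
      (ae_of_all _ fun x => by rw [Real.norm_eq_abs]; exact hC x)
  have hZa : Integrable (fun x => |Z x|) μ := hZi.abs
  have hZ2 : Integrable (fun x => (Z x) ^ 2) μ := by
    refine (integrable_const (C ^ 2)).mono' (hZ.pow_const 2).aestronglyMeasurable
      (ae_of_all _ fun x => ?_)
    rw [Real.norm_eq_abs, abs_of_nonneg (sq_nonneg _), ← sq_abs]
    exact pow_le_pow_left₀ (abs_nonneg _) (hC x) 2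
  have h0 : 0 ≤ ∫ x, (|Z x| - a) ^ 2 ∂μ := integral_nonneg fun x => sq_nonneg _
  have hexp : ∫ x, (|Z x| - a) ^ 2 ∂μ = ∫ x, (Z x) ^ 2 ∂μ - a ^ 2 := by
    have hfun : (fun x => (|Z x| - a) ^ 2)
        = fun x => ((Z x) ^ 2 - (2 * a) * |Z x|) + a ^ 2 := by
      funext x; rw [← sq_abs (Z x)]; ring
    have hsub : Integrable (fun x => Z x ^ 2 - 2 * a * |Z x|) μ :=
      hZ2.sub (hZa.const_mul (2 * a))
    rw [hfun]
    rw [integral_add hsub (integrable_const (a ^ 2)),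
      integral_sub hZ2 (hZa.const_mul (2 * a)), MeasureTheory.integral_const_mul, integral_const,
      probReal_univ, smul_eq_mul, one_mul, ← ha]
    ring
  linarith [hexp ▸ h0]


variable [MetricSpace S] [TopologicalSpace.SeparableSpace S] [MeasurableSpace S] [BorelSpace S]

lemma meas_prodEval {n k : ℕ} (φ : Fin k → (S →ᵇ ℝ)) (j : Fin k → Fin n) :
    Measurable (fun s : Fin n → S => ∏ i, φ i (s (j i))) :=
  Finset.measurable_prod _ fun i _ =>
    ((φ i).continuous.measurable).comp (measurable_pi_apply (j i))

lemma abs_prodEval_le {n k : ℕ} (φ : Fin k → (S →ᵇ ℝ)) (j : Fin k → Fin n) (s : Fin n → S) :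
    |∏ i, φ i (s (j i))| ≤ ∏ i, ‖φ i‖ := by
  rw [Finset.abs_prod]
  exact Finset.prod_le_prod (fun i _ => abs_nonneg _)
    (fun i _ => (φ i).norm_coe_le_norm _)

lemma integrable_prodEval {n k : ℕ} (μ : Measure (Fin n → S)) [IsProbabilityMeasure μ]
    (φ : Fin k → (S →ᵇ ℝ)) (j : Fin k → Fin n) :
    Integrable (fun s => ∏ i, φ i (s (j i))) μ :=
  (integrable_const (∏ i, ‖φ i‖)).mono' (meas_prodEval φ j).aestronglyMeasurable
    (ae_of_all _ fun s => by rw [Real.norm_eq_abs]; exact abs_prodEval_le φ j s)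

lemma symm_integral {n : ℕ} (ρ : Measure (Fin n → S))
    (hs : ∀ π : Equiv.Perm (Fin n), ρ.map (fun s i => s (π i)) = ρ)
    (π : Equiv.Perm (Fin n)) (f : (Fin n → S) → ℝ) (hf : AEStronglyMeasurable f ρ) :
    ∫ s, f (fun i => s (π i)) ∂ρ = ∫ s, f s ∂ρ := by
  have hT : Measurable (fun s : Fin n → S => fun i => s (π i)) :=
    measurable_pi_lambda _ fun i => measurable_pi_apply _
  calc ∫ s, f (fun i => s (π i)) ∂ρ = ∫ s, f s ∂(ρ.map (fun s i => s (π i))) :=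
        (integral_map hT.aemeasurable (by rwa [hs π])).symm
    _ = ∫ s, f s ∂ρ := by rw [hs π]

lemma exists_perm_comp {k n : ℕ} (h : k ≤ n) (f : Fin k → Fin n) (hf : Function.Injective f) :
    ∃ π : Equiv.Perm (Fin n), ∀ i, π (Fin.castLE h i) = f i := by
  classical
  have hc : Function.Injective (Fin.castLE h) := Fin.castLE_injective h
  let e : {x // x ∈ Set.range (Fin.castLE h)} ≃ {x // x ∈ Set.range f} :=
    (Equiv.ofInjective _ hc).symm.trans (Equiv.ofInjective f hf)
  refine ⟨e.extendSubtype, fun i => ?_⟩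
  rw [e.extendSubtype_apply_of_mem _ ⟨i, rfl⟩]
  show (Equiv.ofInjective f hf) ((Equiv.ofInjective _ hc).symm ⟨Fin.castLE h i, ⟨i, rfl⟩⟩) = f i
  have : ((Equiv.ofInjective _ hc).symm ⟨Fin.castLE h i, ⟨i, rfl⟩⟩) = i := by
    rw [Equiv.symm_apply_eq]; rfl
  rw [this]; rfl

lemma eq_marginal {n k : ℕ} (hkn : k ≤ n) (μ : Measure (Fin n → S)) [IsProbabilityMeasure μ]
    (hs : ∀ π : Equiv.Perm (Fin n), μ.map (fun s i => s (π i)) = μ)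
    (φ : Fin k → (S →ᵇ ℝ)) (j : Fin k → Fin n) (hj : Function.Injective j) :
    ∫ s, ∏ i, φ i (s (j i)) ∂μ = ∫ s, ∏ i, φ i (s (Fin.castLE hkn i)) ∂μ := by
  obtain ⟨π, hπ⟩ := exists_perm_comp hkn j hj
  have := symm_integral μ hs π (fun s => ∏ i, φ i (s (Fin.castLE hkn i)))
    (meas_prodEval φ _).aestronglyMeasurable
  rw [← this]
  congr 1; funext s; exact Finset.prod_congr rfl fun i _ => by show φ i (s (j i)) = φ i (s (π (Fin.castLE hkn i))); rw [hπ i]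


lemma key_combo {n k : ℕ} (hkn : k ≤ n) (μ : Measure (Fin n → S)) [IsProbabilityMeasure μ]
    (hs : ∀ π : Equiv.Perm (Fin n), μ.map (fun s i => s (π i)) = μ)
    (φ : Fin k → (S →ᵇ ℝ)) :
    |(∫ s, ∏ i, ((n:ℝ)⁻¹ * ∑ j, φ i (s j)) ∂μ) - ∫ s, ∏ i, φ i (s (Fin.castLE hkn i)) ∂μ|
      ≤ 2 * (∏ i, ‖φ i‖) * (1 - (n.descFactorial k : ℝ) / (n:ℝ)^k) := by
  classical
  rcases Nat.eq_zero_or_pos n with rfl | hn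
  · -- n = 0, k = 0
    interval_cases k
    simp
  set B := ∏ i, ‖φ i‖ with hBdef
  have hB : 0 ≤ B := Finset.prod_nonneg fun i _ => norm_nonneg _
  set T : (Fin k → Fin n) → ℝ := fun g => ∫ s, ∏ i, φ i (s (g i)) ∂μ with hT
  set A : ℝ := ∫ s, ∏ i, φ i (s (Fin.castLE hkn i)) ∂μ with hA
  set N : ℝ := (n:ℝ)^k with hN
  have hNpos : (0:ℝ) < N := by positivity
  set D : ℝ := (n.descFactorial k : ℝ) with hD
  have hDN : D ≤ N := by
    rw [hD, hN]
    exact_mod_cast Nat.descFactorial_le_pow n k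
  have hDnn : (0:ℝ) ≤ D := by positivity
  -- bound on each T g
  have hTb : ∀ g : Fin k → Fin n, |T g| ≤ B := by
    intro g
    rw [← Real.norm_eq_abs]
    calc ‖T g‖ ≤ B * (μ Set.univ).toReal :=
          norm_integral_le_of_norm_le_const (ae_of_all _ fun s => by
            rw [Real.norm_eq_abs]; exact abs_prodEval_le φ g s)
      _ = B := by simp
  have hAb : |A| ≤ B := hTb (fun i => Fin.castLE hkn i)
  -- expansion
  have hexp : (∫ s, ∏ i, ((n:ℝ)⁻¹ * ∑ j, φ i (s j)) ∂μ) = N⁻¹ * ∑ g : Fin k → Fin n, T g := by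
    have hpt : ∀ s : Fin n → S, ∏ i, ((n:ℝ)⁻¹ * ∑ j, φ i (s j))
        = N⁻¹ * ∑ g : Fin k → Fin n, ∏ i, φ i (s (g i)) := by
      intro s
      rw [Finset.prod_mul_distrib, Finset.prod_const, Finset.card_univ, Fintype.card_fin,
        inv_pow, ← hN]
      congr 1
      rw [Finset.prod_univ_sum]
      rw [Fintype.piFinset_univ]
    calc (∫ s, ∏ i, ((n:ℝ)⁻¹ * ∑ j, φ i (s j)) ∂μ)
        = ∫ s, N⁻¹ * ∑ g : Fin k → Fin n, ∏ i, φ i (s (g i)) ∂μ := by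
          exact integral_congr_ae (ae_of_all _ hpt)
      _ = N⁻¹ * ∫ s, ∑ g : Fin k → Fin n, ∏ i, φ i (s (g i)) ∂μ :=
          MeasureTheory.integral_const_mul _ _
      _ = N⁻¹ * ∑ g : Fin k → Fin n, T g := by
          rw [integral_finset_sum _ (fun g _ => integrable_prodEval μ φ g)]
  -- split the sum
  set R : ℝ := ∑ g ∈ Finset.univ.filter (fun g : Fin k → Fin n => ¬ Function.Injective g), T g
    with hR
  have hsplit : ∑ g : Fin k → Fin n, T g = D * A + R := by
    rw [← Finset.sum_filter_add_sum_filter_not Finset.univ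
      (fun g : Fin k → Fin n => Function.Injective g) T]
    congr 1
    have : ∀ g ∈ Finset.univ.filter (fun g : Fin k → Fin n => Function.Injective g), T g = A := by
      intro g hg
      exact eq_marginal hkn μ hs φ g (Finset.mem_filter.mp hg).2
    rw [Finset.sum_congr rfl this, Finset.sum_const, card_filter_injective, nsmul_eq_mul, hD]
  -- bound on R
  have hcard : ((Finset.univ.filter (fun g : Fin k → Fin n => ¬ Function.Injective g)).card : ℝ)
      = N - D := by
    have h1 := Finset.card_filter_add_card_filter_not
      (s := (Finset.univ : Finset (Fin k → Fin n)))
      (p := fun g : Fin k → Fin n => Function.Injective g)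
    rw [card_filter_injective, Finset.card_univ] at h1
    have h2 : Fintype.card (Fin k → Fin n) = n ^ k := by
      rw [Fintype.card_fun, Fintype.card_fin, Fintype.card_fin]
    rw [h2] at h1
    have : (Finset.univ.filter (fun g : Fin k → Fin n => ¬ Function.Injective g)).card
        = n ^ k - n.descFactorial k := by omega
    rw [this, Nat.cast_sub (Nat.descFactorial_le_pow n k), hD, hN]
    push_cast
    ring
  have hRb : |R| ≤ (N - D) * B := by
    calc |R| ≤ ∑ g ∈ Finset.univ.filter (fun g : Fin k → Fin n => ¬ Function.Injective g), |T g| :=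
          Finset.abs_sum_le_sum_abs _ _
      _ ≤ (Finset.univ.filter (fun g : Fin k → Fin n => ¬ Function.Injective g)).card • B :=
          Finset.sum_le_card_nsmul _ _ B (fun g _ => hTb g)
      _ = (N - D) * B := by rw [nsmul_eq_mul, hcard]
  -- final arithmetic
  rw [hexp, hsplit]
  have hkey : N⁻¹ * (D * A + R) - A = (D / N - 1) * A + R / N := by
    field_simp
    ring
  rw [hkey]
  have h1 : |(D / N - 1) * A| ≤ (1 - D / N) * B := by
    rw [abs_mul, abs_of_nonpos (by
      have : D / N ≤ 1 := (div_le_one hNpos).mpr hDN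
      linarith)]
    have : -(D / N - 1) = 1 - D / N := by ring
    rw [this]
    have hge : (0:ℝ) ≤ 1 - D / N := by
      have : D / N ≤ 1 := (div_le_one hNpos).mpr hDN
      linarith
    exact mul_le_mul_of_nonneg_left hAb hge
  have h2 : |R / N| ≤ (1 - D / N) * B := by
    rw [abs_div, abs_of_pos hNpos, div_le_iff₀ hNpos]
    calc |R| ≤ (N - D) * B := hRb
      _ = (1 - D / N) * B * N := by field_simp
  calc |(D / N - 1) * A + R / N| ≤ |(D / N - 1) * A| + |R / N| := abs_add_le _ _
    _ ≤ (1 - D / N) * B + (1 - D / N) * B := add_le_add h1 h2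
    _ = 2 * B * (1 - D / N) := by ring

lemma tendsto_P_sub_G (ρs : ∀ n, ProbabilityMeasure (Fin n → S))
    (hsym : ∀ n, IsSymmetric (ρs n : Measure (Fin n → S)))
    (k : ℕ) (φ : Fin k → (S →ᵇ ℝ)) :
    Filter.Tendsto (fun n =>
      (∫ s, ∏ i : Fin k, ((n:ℝ)⁻¹ * ∑ j, φ i (s j)) ∂(ρs n : Measure (Fin n → S)))
      - ∫ s, ∏ i : Fin k, (if h : (i:ℕ) < n then φ i (s ⟨i, h⟩) else 1)
          ∂(ρs n : Measure (Fin n → S))) Filter.atTop (nhds 0) := by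
  have hb : ∀ᶠ n in Filter.atTop, |(∫ s, ∏ i : Fin k, ((n:ℝ)⁻¹ * ∑ j, φ i (s j))
        ∂(ρs n : Measure (Fin n → S)))
      - ∫ s, ∏ i : Fin k, (if h : (i:ℕ) < n then φ i (s ⟨i, h⟩) else 1)
          ∂(ρs n : Measure (Fin n → S))|
      ≤ 2 * (∏ i, ‖φ i‖) * (1 - (n.descFactorial k : ℝ) / (n:ℝ)^k) := by
    filter_upwards [Filter.eventually_ge_atTop k] with n hkn
    have hGA : (∫ s, ∏ i : Fin k, (if h : (i:ℕ) < n then φ i (s ⟨i, h⟩) else 1)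
          ∂(ρs n : Measure (Fin n → S)))
        = ∫ s, ∏ i : Fin k, φ i (s (Fin.castLE hkn i)) ∂(ρs n : Measure (Fin n → S)) := by
      congr 1; funext s
      refine Finset.prod_congr rfl fun i _ => ?_
      rw [dif_pos (lt_of_lt_of_le i.isLt hkn)]
      rfl
    rw [hGA]
    exact key_combo hkn _ (hsym n) φ
  have hlim : Filter.Tendsto (fun n : ℕ => 2 * (∏ i, ‖φ i‖)
      * (1 - (n.descFactorial k : ℝ) / (n:ℝ)^k)) Filter.atTop (nhds 0) := by
    have h1 : Filter.Tendsto (fun n : ℕ => 1 - (n.descFactorial k : ℝ) / (n:ℝ)^k)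
        Filter.atTop (nhds 0) := by
      simpa using (tendsto_const_nhds (x := (1:ℝ))).sub (tendsto_descFactorial_ratio k)
    simpa using h1.const_mul (2 * ∏ i, ‖φ i‖)
  rw [tendsto_zero_iff_abs_tendsto_zero]
  exact squeeze_zero' (Filter.Eventually.of_forall fun n => abs_nonneg _) hb hlim

lemma integrable_of_abs_bound {α : Type*} [MeasurableSpace α] (μ : Measure α)
    [IsFiniteMeasure μ] {f : α → ℝ} (hf : Measurable f) (C : ℝ) (hC : ∀ s, |f s| ≤ C) :
    Integrable f μ :=
  (integrable_const C).mono' hf.aestronglyMeasurable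
    (ae_of_all _ fun s => by rw [Real.norm_eq_abs]; exact hC s)

lemma measurable_Y {n : ℕ} (ψ : S →ᵇ ℝ) :
    Measurable (fun s : Fin n → S => (n:ℝ)⁻¹ * ∑ j, ψ (s j)) :=
  (Finset.measurable_sum _ fun j _ =>
    ψ.continuous.measurable.comp (measurable_pi_apply j)).const_mul _

lemma abs_Y_le {n : ℕ} (ψ : S →ᵇ ℝ) (s : Fin n → S) :
    |(n:ℝ)⁻¹ * ∑ j, ψ (s j)| ≤ ‖ψ‖ := by
  rcases Nat.eq_zero_or_pos n with rfl | hn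
  · simp
  have h1 : |∑ j : Fin n, ψ (s j)| ≤ (n : ℝ) * ‖ψ‖ := by
    calc |∑ j : Fin n, ψ (s j)| ≤ ∑ j : Fin n, |ψ (s j)| := Finset.abs_sum_le_sum_abs _ _
      _ ≤ Finset.univ.card • ‖ψ‖ :=
          Finset.sum_le_card_nsmul _ _ _ (fun j _ => ψ.norm_coe_le_norm _)
      _ = (n : ℝ) * ‖ψ‖ := by rw [nsmul_eq_mul, Finset.card_univ, Fintype.card_fin]
  rw [abs_mul, abs_inv, Nat.abs_cast]
  have hn' : (0:ℝ) < n := by exact_mod_cast hn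
  calc (n:ℝ)⁻¹ * |∑ j : Fin n, ψ (s j)| ≤ (n:ℝ)⁻¹ * ((n:ℝ) * ‖ψ‖) := by
        exact mul_le_mul_of_nonneg_left h1 (by positivity)
    _ = ‖ψ‖ := by field_simp

-- first moment
lemma tendsto_first_moment (ρ : ProbabilityMeasure S) (ρs : ∀ n, ProbabilityMeasure (Fin n → S))
    (hsym : ∀ n, IsSymmetric (ρs n : Measure (Fin n → S)))
    (h2 : ∀ φ₁ φ₂ : S →ᵇ ℝ,
      Filter.Tendsto (fun n => ∫ s, (if h : 0 < n then φ₁ (s ⟨0, h⟩) else 1) *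
          (if h : 1 < n then φ₂ (s ⟨1, h⟩) else 1) ∂ (ρs n : Measure (Fin n → S)))
        Filter.atTop (nhds ((∫ x, φ₁ x ∂ (ρ : Measure S)) * (∫ x, φ₂ x ∂ (ρ : Measure S)))))
    (ψ : S →ᵇ ℝ) :
    Filter.Tendsto (fun n => ∫ s, (n:ℝ)⁻¹ * ∑ j, ψ (s j) ∂(ρs n : Measure (Fin n → S)))
      Filter.atTop (nhds (∫ x, ψ x ∂(ρ : Measure S))) := by
  have hG1 : Filter.Tendsto (fun n => ∫ s, ∏ i : Fin 1,
      (if h : (i:ℕ) < n then (![ψ]) i (s ⟨i, h⟩) else 1) ∂(ρs n : Measure (Fin n → S)))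
      Filter.atTop (nhds (∫ x, ψ x ∂(ρ : Measure S))) := by
    have key := h2 ψ 1
    have heq : (fun n => ∫ s, (if h : 0 < n then ψ (s ⟨0, h⟩) else 1) *
          (if h : 1 < n then (1 : S →ᵇ ℝ) (s ⟨1, h⟩) else 1) ∂ (ρs n : Measure (Fin n → S)))
        = fun n => ∫ s, ∏ i : Fin 1,
          (if h : (i:ℕ) < n then (![ψ]) i (s ⟨i, h⟩) else 1) ∂(ρs n : Measure (Fin n → S)) := by
      funext n; congr 1; funext s
      rw [Fin.prod_univ_one]
      have h1 : (if h : 1 < n then (1 : S →ᵇ ℝ) (s ⟨1, h⟩) else 1) = 1 := by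
        split <;> simp
      rw [h1, mul_one]
      rfl
    have hone : (∫ x, (1 : S →ᵇ ℝ) x ∂(ρ : Measure S)) = 1 := by simp
    rw [heq, hone, mul_one] at key
    exact key
  have hdiff := tendsto_P_sub_G ρs hsym 1 ![ψ]
  have heq2 : (fun n => (∫ s, ∏ i : Fin 1, ((n:ℝ)⁻¹ * ∑ j, (![ψ]) i (s j))
        ∂(ρs n : Measure (Fin n → S))))
      = fun n => ∫ s, (n:ℝ)⁻¹ * ∑ j, ψ (s j) ∂(ρs n : Measure (Fin n → S)) := by
    funext n; congr 1; funext s; rw [Fin.prod_univ_one]; rfl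
  have hdiff' := hdiff.congr (fun n => by rw [congrFun heq2 n])
  have := hdiff'.add hG1
  simpa using this

-- second moment
lemma tendsto_second_moment (ρ : ProbabilityMeasure S) (ρs : ∀ n, ProbabilityMeasure (Fin n → S))
    (hsym : ∀ n, IsSymmetric (ρs n : Measure (Fin n → S)))
    (h2 : ∀ φ₁ φ₂ : S →ᵇ ℝ,
      Filter.Tendsto (fun n => ∫ s, (if h : 0 < n then φ₁ (s ⟨0, h⟩) else 1) *
          (if h : 1 < n then φ₂ (s ⟨1, h⟩) else 1) ∂ (ρs n : Measure (Fin n → S)))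
        Filter.atTop (nhds ((∫ x, φ₁ x ∂ (ρ : Measure S)) * (∫ x, φ₂ x ∂ (ρ : Measure S)))))
    (ψ : S →ᵇ ℝ) :
    Filter.Tendsto (fun n => ∫ s, ((n:ℝ)⁻¹ * ∑ j, ψ (s j))^2 ∂(ρs n : Measure (Fin n → S)))
      Filter.atTop (nhds ((∫ x, ψ x ∂(ρ : Measure S))^2)) := by
  have hG2 : Filter.Tendsto (fun n => ∫ s, ∏ i : Fin 2,
      (if h : (i:ℕ) < n then (![ψ, ψ]) i (s ⟨i, h⟩) else 1) ∂(ρs n : Measure (Fin n → S)))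
      Filter.atTop (nhds ((∫ x, ψ x ∂(ρ : Measure S))^2)) := by
    have key := h2 ψ ψ
    have heq : (fun n => ∫ s, (if h : 0 < n then ψ (s ⟨0, h⟩) else 1) *
          (if h : 1 < n then ψ (s ⟨1, h⟩) else 1) ∂ (ρs n : Measure (Fin n → S)))
        = fun n => ∫ s, ∏ i : Fin 2,
          (if h : (i:ℕ) < n then (![ψ, ψ]) i (s ⟨i, h⟩) else 1) ∂(ρs n : Measure (Fin n → S)) := by
      funext n; congr 1; funext s
      rw [Fin.prod_univ_two]
      rfl
    rw [heq, ← sq] at key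
    exact key
  have hdiff := tendsto_P_sub_G ρs hsym 2 ![ψ, ψ]
  have heq2 : (fun n => (∫ s, ∏ i : Fin 2, ((n:ℝ)⁻¹ * ∑ j, (![ψ, ψ]) i (s j))
        ∂(ρs n : Measure (Fin n → S))))
      = fun n => ∫ s, ((n:ℝ)⁻¹ * ∑ j, ψ (s j))^2 ∂(ρs n : Measure (Fin n → S)) := by
    funext n; congr 1; funext s
    rw [Fin.prod_univ_two]
    simp only [Matrix.cons_val_zero, Matrix.cons_val_one, Matrix.head_cons]
    rw [← sq]
  have hdiff' := hdiff.congr (fun n => by rw [congrFun heq2 n])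
  have := hdiff'.add hG2
  simpa using this

lemma tendsto_L1 (ρ : ProbabilityMeasure S) (ρs : ∀ n, ProbabilityMeasure (Fin n → S))
    (hsym : ∀ n, IsSymmetric (ρs n : Measure (Fin n → S)))
    (h2 : ∀ φ₁ φ₂ : S →ᵇ ℝ,
      Filter.Tendsto (fun n => ∫ s, (if h : 0 < n then φ₁ (s ⟨0, h⟩) else 1) *
          (if h : 1 < n then φ₂ (s ⟨1, h⟩) else 1) ∂ (ρs n : Measure (Fin n → S)))
        Filter.atTop (nhds ((∫ x, φ₁ x ∂ (ρ : Measure S)) * (∫ x, φ₂ x ∂ (ρ : Measure S)))))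
    (ψ : S →ᵇ ℝ) :
    Filter.Tendsto (fun n => ∫ s, |(n:ℝ)⁻¹ * ∑ j, ψ (s j) - ∫ x, ψ x ∂(ρ : Measure S)|
      ∂(ρs n : Measure (Fin n → S))) Filter.atTop (nhds 0) := by
  set m := ∫ x, ψ x ∂(ρ : Measure S) with hm
  have hZmeas : ∀ n : ℕ, Measurable (fun s : Fin n → S => (n:ℝ)⁻¹ * ∑ j, ψ (s j) - m) :=
    fun n => (measurable_Y ψ).sub measurable_const
  have hZb : ∀ (n : ℕ) (s : Fin n → S), |(n:ℝ)⁻¹ * ∑ j, ψ (s j) - m| ≤ ‖ψ‖ + |m| := by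
    intro n s
    rw [sub_eq_add_neg]
    exact (abs_add_le _ _).trans (add_le_add (abs_Y_le ψ s) (le_of_eq (abs_neg m)))
  -- variance tends to zero
  have hvar : Filter.Tendsto (fun n => ∫ s, ((n:ℝ)⁻¹ * ∑ j, ψ (s j) - m)^2
      ∂(ρs n : Measure (Fin n → S))) Filter.atTop (nhds 0) := by
    have hfirst := tendsto_first_moment ρ ρs hsym h2 ψ
    have hsec := tendsto_second_moment ρ ρs hsym h2 ψ
    have heq : ∀ n : ℕ, ∫ s, ((n:ℝ)⁻¹ * ∑ j, ψ (s j) - m)^2 ∂(ρs n : Measure (Fin n → S))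
        = (∫ s, ((n:ℝ)⁻¹ * ∑ j, ψ (s j))^2 ∂(ρs n : Measure (Fin n → S)))
          - 2 * m * (∫ s, (n:ℝ)⁻¹ * ∑ j, ψ (s j) ∂(ρs n : Measure (Fin n → S))) + m^2 := by
      intro n
      have hYi : Integrable (fun s : Fin n → S => (n:ℝ)⁻¹ * ∑ j, ψ (s j))
          (ρs n : Measure (Fin n → S)) :=
        integrable_of_abs_bound _ (measurable_Y ψ) ‖ψ‖ (abs_Y_le ψ)
      have hY2i : Integrable (fun s : Fin n → S => ((n:ℝ)⁻¹ * ∑ j, ψ (s j))^2)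
          (ρs n : Measure (Fin n → S)) := by
        refine integrable_of_abs_bound _ ((measurable_Y ψ).pow_const 2) (‖ψ‖^2) fun s => ?_
        rw [abs_of_nonneg (sq_nonneg _), ← sq_abs]
        exact pow_le_pow_left₀ (abs_nonneg _) (abs_Y_le ψ s) 2
      have hfun : (fun s : Fin n → S => ((n:ℝ)⁻¹ * ∑ j, ψ (s j) - m)^2)
          = fun s => (((n:ℝ)⁻¹ * ∑ j, ψ (s j))^2 - 2 * m * ((n:ℝ)⁻¹ * ∑ j, ψ (s j))) + m^2 := by
        funext s; ring
      have hsub : Integrable (fun s : Fin n → S =>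
          ((n:ℝ)⁻¹ * ∑ j, ψ (s j))^2 - 2 * m * ((n:ℝ)⁻¹ * ∑ j, ψ (s j)))
          (ρs n : Measure (Fin n → S)) := hY2i.sub (hYi.const_mul (2 * m))
      rw [hfun, integral_add hsub (integrable_const (m^2)),
        integral_sub hY2i (hYi.const_mul (2 * m)), MeasureTheory.integral_const_mul,
        integral_const, probReal_univ, smul_eq_mul, one_mul]
    have hcomb := (hsec.sub (hfirst.const_mul (2 * m))).add
      (tendsto_const_nhds (x := m^2) (f := Filter.atTop (α := ℕ)))
    have hlim0 : m^2 - 2 * m * m + m^2 = 0 := by ring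
    rw [hlim0] at hcomb
    exact hcomb.congr (fun n => (heq n).symm)
  -- L1 via Cauchy-Schwarz
  have hnn : ∀ n : ℕ, 0 ≤ ∫ s, |(n:ℝ)⁻¹ * ∑ j, ψ (s j) - m| ∂(ρs n : Measure (Fin n → S)) :=
    fun n => integral_nonneg fun s => abs_nonneg _
  have hle : ∀ n : ℕ, (∫ s, |(n:ℝ)⁻¹ * ∑ j, ψ (s j) - m| ∂(ρs n : Measure (Fin n → S)))
      ≤ Real.sqrt (∫ s, ((n:ℝ)⁻¹ * ∑ j, ψ (s j) - m)^2 ∂(ρs n : Measure (Fin n → S))) := by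
    intro n
    have h1 := sq_integral_abs_le (ρs n : Measure (Fin n → S)) _ (hZmeas n) (‖ψ‖ + |m|) (hZb n)
    calc (∫ s, |(n:ℝ)⁻¹ * ∑ j, ψ (s j) - m| ∂(ρs n : Measure (Fin n → S)))
        = Real.sqrt ((∫ s, |(n:ℝ)⁻¹ * ∑ j, ψ (s j) - m| ∂(ρs n : Measure (Fin n → S)))^2) :=
          (Real.sqrt_sq (hnn n)).symm
      _ ≤ _ := Real.sqrt_le_sqrt h1
  have hsqrt : Filter.Tendsto (fun n => Real.sqrt (∫ s, ((n:ℝ)⁻¹ * ∑ j, ψ (s j) - m)^2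
      ∂(ρs n : Measure (Fin n → S)))) Filter.atTop (nhds 0) := by
    have := (Real.continuous_sqrt.tendsto 0).comp hvar
    simpa [Function.comp_def] using this
  exact squeeze_zero hnn hle hsqrt

lemma tendsto_P (ρ : ProbabilityMeasure S) (ρs : ∀ n, ProbabilityMeasure (Fin n → S))
    (hsym : ∀ n, IsSymmetric (ρs n : Measure (Fin n → S)))
    (h2 : ∀ φ₁ φ₂ : S →ᵇ ℝ,
      Filter.Tendsto (fun n => ∫ s, (if h : 0 < n then φ₁ (s ⟨0, h⟩) else 1) *
          (if h : 1 < n then φ₂ (s ⟨1, h⟩) else 1) ∂ (ρs n : Measure (Fin n → S)))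
        Filter.atTop (nhds ((∫ x, φ₁ x ∂ (ρ : Measure S)) * (∫ x, φ₂ x ∂ (ρ : Measure S)))))
    (k : ℕ) (φ : Fin k → (S →ᵇ ℝ)) :
    Filter.Tendsto (fun n => ∫ s, ∏ i : Fin k, ((n:ℝ)⁻¹ * ∑ j, φ i (s j))
      ∂(ρs n : Measure (Fin n → S))) Filter.atTop
      (nhds (∏ i, ∫ x, φ i x ∂(ρ : Measure S))) := by
  classical
  set m : Fin k → ℝ := fun i => ∫ x, φ i x ∂(ρ : Measure S) with hm
  have hmb : ∀ i, |m i| ≤ ‖φ i‖ := by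
    intro i
    rw [← Real.norm_eq_abs]
    calc ‖m i‖ ≤ ‖φ i‖ * ((ρ : Measure S) Set.univ).toReal :=
          norm_integral_le_of_norm_le_const (ae_of_all _ fun x => (φ i).norm_coe_le_norm x)
      _ = ‖φ i‖ := by simp
  have hb : ∀ n : ℕ, |(∫ s, ∏ i : Fin k, ((n:ℝ)⁻¹ * ∑ j, φ i (s j))
        ∂(ρs n : Measure (Fin n → S))) - ∏ i, m i|
      ≤ ∑ i : Fin k, (∏ l ∈ Finset.univ.erase i, ‖φ l‖) *
          ∫ s, |(n:ℝ)⁻¹ * ∑ j, φ i (s j) - m i| ∂(ρs n : Measure (Fin n → S)) := by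
    intro n
    have hPim : Measurable (fun s : Fin n → S => ∏ i : Fin k, ((n:ℝ)⁻¹ * ∑ j, φ i (s j))) :=
      Finset.measurable_prod _ fun i _ => measurable_Y (φ i)
    have hPi : Integrable (fun s : Fin n → S => ∏ i : Fin k, ((n:ℝ)⁻¹ * ∑ j, φ i (s j)))
        (ρs n : Measure (Fin n → S)) := by
      refine integrable_of_abs_bound _ hPim (∏ i, ‖φ i‖) fun s => ?_
      rw [Finset.abs_prod]
      exact Finset.prod_le_prod (fun i _ => abs_nonneg _) (fun i _ => abs_Y_le (φ i) s)
    have hZint : ∀ i : Fin k, Integrable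
        (fun s : Fin n → S => |(n:ℝ)⁻¹ * ∑ j, φ i (s j) - m i|)
        (ρs n : Measure (Fin n → S)) := by
      intro i
      exact (integrable_of_abs_bound _ ((measurable_Y (φ i)).sub measurable_const)
        (‖φ i‖ + |m i|) (fun s => by
          rw [sub_eq_add_neg]
          exact (abs_add_le _ _).trans (add_le_add (abs_Y_le (φ i) s) (le_of_eq (abs_neg _))))).abs
    have hseq : (∫ s, (∏ i : Fin k, ((n:ℝ)⁻¹ * ∑ j, φ i (s j)) - ∏ i, m i)
          ∂(ρs n : Measure (Fin n → S)))
        = (∫ s, ∏ i : Fin k, ((n:ℝ)⁻¹ * ∑ j, φ i (s j)) ∂(ρs n : Measure (Fin n → S)))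
          - ∏ i, m i := by
      rw [integral_sub hPi (integrable_const _), integral_const, probReal_univ, smul_eq_mul, one_mul]
    rw [← hseq]
    have hnorm := norm_integral_le_integral_norm (μ := (ρs n : Measure (Fin n → S)))
      (f := fun s => ∏ i : Fin k, ((n:ℝ)⁻¹ * ∑ j, φ i (s j)) - ∏ i, m i)
    simp only [Real.norm_eq_abs] at hnorm
    refine hnorm.trans ?_
    have hmono : (∫ s, |∏ i : Fin k, ((n:ℝ)⁻¹ * ∑ j, φ i (s j)) - ∏ i, m i|
          ∂(ρs n : Measure (Fin n → S)))
        ≤ ∫ s, ∑ i : Fin k, (∏ l ∈ Finset.univ.erase i, ‖φ l‖) *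
            |(n:ℝ)⁻¹ * ∑ j, φ i (s j) - m i| ∂(ρs n : Measure (Fin n → S)) := by
      refine integral_mono ((hPi.sub (integrable_const _)).abs) ?_ ?_
      · exact integrable_finset_sum _ fun i _ => (hZint i).const_mul _
      · intro s
        exact abs_prod_sub_prod_le Finset.univ (fun i => (n:ℝ)⁻¹ * ∑ j, φ i (s j)) m
          (fun i => ‖φ i‖) (fun i _ => abs_Y_le (φ i) s) (fun i _ => hmb i)
    refine hmono.trans (le_of_eq ?_)
    rw [integral_finset_sum _ fun i _ => (hZint i).const_mul _]
    exact Finset.sum_congr rfl fun i _ => MeasureTheory.integral_const_mul _ _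
  have hlim : Filter.Tendsto (fun n : ℕ => ∑ i : Fin k,
      (∏ l ∈ Finset.univ.erase i, ‖φ l‖) *
        ∫ s, |(n:ℝ)⁻¹ * ∑ j, φ i (s j) - m i| ∂(ρs n : Measure (Fin n → S)))
      Filter.atTop (nhds 0) := by
    have : Filter.Tendsto (fun n : ℕ => ∑ i : Fin k,
        (∏ l ∈ Finset.univ.erase i, ‖φ l‖) *
          ∫ s, |(n:ℝ)⁻¹ * ∑ j, φ i (s j) - m i| ∂(ρs n : Measure (Fin n → S)))
        Filter.atTop (nhds (∑ i : Fin k, (∏ l ∈ Finset.univ.erase i, ‖φ l‖) * 0)) := by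
      refine tendsto_finset_sum _ fun i _ => ?_
      exact (tendsto_L1 ρ ρs hsym h2 (φ i)).const_mul _
    simpa using this
  have hdiff : Filter.Tendsto (fun n => (∫ s, ∏ i : Fin k, ((n:ℝ)⁻¹ * ∑ j, φ i (s j))
      ∂(ρs n : Measure (Fin n → S))) - ∏ i, m i) Filter.atTop (nhds 0) := by
    rw [tendsto_zero_iff_abs_tendsto_zero]
    exact squeeze_zero' (Filter.Eventually.of_forall fun n => abs_nonneg _)
      (Filter.Eventually.of_forall hb) hlim
  have := hdiff.add (tendsto_const_nhds (x := ∏ i, m i) (f := Filter.atTop (α := ℕ)))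
  simpa using this


end SznitmanAux

/-- Sznitman–Tanaka (ii) ⟹ (i): convergence of two-particle correlations implies
Kac chaoticity. -/
theorem stmt_0 {S : Type*} [MetricSpace S] [TopologicalSpace.SeparableSpace S]
    [MeasurableSpace S] [BorelSpace S]
    (ρ : ProbabilityMeasure S) (ρs : ∀ n, ProbabilityMeasure (Fin n → S))
    (hsym : ∀ n, IsSymmetric (ρs n : Measure (Fin n → S)))
    (h2 : ∀ φ₁ φ₂ : S →ᵇ ℝ,
      Tendsto (fun n => ∫ s, (if h : 0 < n then φ₁ (s ⟨0, h⟩) else 1) *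
          (if h : 1 < n then φ₂ (s ⟨1, h⟩) else 1) ∂ (ρs n : Measure (Fin n → S)))
        atTop (𝓝 ((∫ x, φ₁ x ∂ (ρ : Measure S)) * (∫ x, φ₂ x ∂ (ρ : Measure S))))) :
    IsChaotic (fun n => (ρs n : Measure (Fin n → S))) (ρ : Measure S) := by
  intro k φ
  have hP := tendsto_P ρ ρs hsym h2 k φ
  have hdiff := tendsto_P_sub_G ρs hsym k φ
  have := hP.sub hdiff
  simpa using this
end
end

section
/- For a product law: if ρ ∈ P(S) with S a separable metric space, then the sequence of product laws {ρ^{⊗n}} is ρ-chaotic; equivalently, the empirical measures of n i.i.d. ρ-distributed samples converge in law to the constant ρ (the pushforwards ρ^{⊗n} ∘ ε_n^{-1} converge weakly to δ(ρ) in P(P(S))). -/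
open MeasureTheory Filter Topology BoundedContinuousFunction
open scoped ENNReal NNReal
noncomputable section
variable {S : Type*}

namespace Helpers

section cheb
variable {S : Type*} [MeasurableSpace S]

lemma prod_integral_pi {n : ℕ} (ρ : Measure S) [IsProbabilityMeasure ρ] (F : Fin n → S → ℝ) :
    ∫ s, ∏ i, F i (s i) ∂(Measure.pi fun _ : Fin n => ρ) = ∏ i, ∫ x, F i x ∂ρ := by
  letI : MeasureSpace S := ⟨ρ⟩
  have h : (Measure.pi fun _ : Fin n => ρ) = (volume : Measure (Fin n → S)) :=
    (volume_pi).symm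
  rw [h]
  exact MeasureTheory.integral_fin_nat_prod_eq_prod F

lemma cheb (ρ : Measure S) [IsProbabilityMeasure ρ] (g : S → ℝ) (hg : Measurable g)
    (C : ℝ) (hC : ∀ x, |g x| ≤ C) {δ : ℝ} (hδ : 0 < δ) (n : ℕ) (hn : 0 < n) :
    ((Measure.pi fun _ : Fin n => ρ)
        {s | δ ≤ |(∑ i, g (s i)) / n - ∫ x, g x ∂ρ|}).toReal
      ≤ (2 * C) ^ 2 / (δ ^ 2 * n) := by
  set m : ℝ := ∫ x, g x ∂ρ with hm
  set h : S → ℝ := fun x => g x - m with hh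
  set π : Measure (Fin n → S) := Measure.pi fun _ : Fin n => ρ with hπ
  have hgi : Integrable g ρ :=
    (integrable_const C).mono' hg.aestronglyMeasurable
      (ae_of_all _ fun x => by simpa [Real.norm_eq_abs] using hC x)
  have hmeas_h : Measurable h := hg.sub measurable_const
  have hmabs : |m| ≤ C := by
    have := norm_integral_le_of_norm_le_const (μ := ρ) (f := g) (C := C)
      (ae_of_all _ fun x => by simpa [Real.norm_eq_abs] using hC x)
    simpa [Real.norm_eq_abs, measure_univ] using this
  have hhb : ∀ x, |h x| ≤ 2 * C := fun x => by
    calc |h x| ≤ |g x| + |m| := abs_sub _ _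
    _ ≤ C + C := add_le_add (hC x) hmabs
    _ = 2 * C := by ring
  have hhi : Integrable h ρ := hgi.sub (integrable_const m)
  have hzero : ∫ x, h x ∂ρ = 0 := by
    rw [hh]
    rw [integral_sub hgi (integrable_const m)]
    simp [measure_univ, ← hm]
  have hh2i : Integrable (fun x => h x ^ 2) ρ :=
    (integrable_const ((2*C)^2)).mono' (hmeas_h.pow_const 2).aestronglyMeasurable
      (ae_of_all _ fun x => by
        rw [Real.norm_eq_abs, abs_pow]
        exact pow_le_pow_left₀ (abs_nonneg _) (hhb x) 2)
  have hh2b : ∫ x, h x ^ 2 ∂ρ ≤ (2 * C) ^ 2 := by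
    calc ∫ x, h x ^ 2 ∂ρ ≤ ∫ _, (2*C)^2 ∂ρ := by
          refine integral_mono hh2i (integrable_const _) fun x => ?_
          calc h x ^ 2 = |h x| ^ 2 := (sq_abs _).symm
          _ ≤ (2*C)^2 := pow_le_pow_left₀ (abs_nonneg _) (hhb x) 2
    _ = (2*C)^2 := by simp [measure_univ]
  -- cross moments
  have key : ∀ i j : Fin n, ∫ s, h (s i) * h (s j) ∂π
      = if i = j then ∫ x, h x ^ 2 ∂ρ else 0 := by
    intro i j
    by_cases hij : i = j
    · subst hij
      simp only [if_pos rfl]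
      have := prod_integral_pi ρ (fun l x => if l = i then h x ^ 2 else 1)
      have hL : ∀ s : Fin n → S, (∏ l, (if l = i then h (s l) ^ 2 else 1)) = h (s i) * h (s i) := by
        intro s
        rw [Finset.prod_eq_single i (fun b _ hb => if_neg hb) (by simp)]
        simp [sq]
      have hR : (∏ l : Fin n, ∫ x, (if l = i then h x ^ 2 else (1:ℝ)) ∂ρ) = ∫ x, h x ^ 2 ∂ρ := by
        rw [Finset.prod_eq_single i (fun b _ hb => by simp [if_neg hb, measure_univ]) (by simp)]
        simp
      calc ∫ s, h (s i) * h (s i) ∂π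
          = ∫ s, ∏ l, (fun l x => if l = i then h x ^ 2 else 1) l (s l) ∂π := by
            apply integral_congr_ae; filter_upwards with s; simp [hL s]
      _ = ∏ l : Fin n, ∫ x, (if l = i then h x ^ 2 else (1:ℝ)) ∂ρ := by
            rw [hπ]; exact prod_integral_pi ρ (fun l x => if l = i then h x ^ 2 else 1)
      _ = ∫ x, h x ^ 2 ∂ρ := hR
    · simp only [if_neg hij]
      have hL : ∀ s : Fin n → S,
          (∏ l, (if l = i then h (s l) else if l = j then h (s l) else 1)) = h (s i) * h (s j) := by
        intro s
        rw [← Finset.prod_subset (Finset.subset_univ ({i, j} : Finset (Fin n)))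
          (fun x _ hx => by
            simp only [Finset.mem_insert, Finset.mem_singleton, not_or] at hx
            simp [if_neg hx.1, if_neg hx.2])]
        rw [Finset.prod_pair hij]
        simp [if_neg (Ne.symm hij)]
      calc ∫ s, h (s i) * h (s j) ∂π
          = ∫ s, ∏ l, (fun l x => if l = i then h x else if l = j then h x else 1) l (s l) ∂π := by
            apply integral_congr_ae; filter_upwards with s; simp [hL s]
      _ = ∏ l : Fin n, ∫ x, (if l = i then h x else if l = j then h x else (1:ℝ)) ∂ρ := by
            rw [hπ]; exact prod_integral_pi ρ (fun l x => if l = i then h x else if l = j then h x else 1)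
      _ = 0 := by
        apply Finset.prod_eq_zero (Finset.mem_univ i)
        simp [hzero]
  have hmeas_hl : ∀ i : Fin n, Measurable fun s : Fin n → S => h (s i) :=
    fun i => hmeas_h.comp (measurable_pi_apply i)
  have hint_ij : ∀ i j : Fin n, Integrable (fun s => h (s i) * h (s j)) π := by
    intro i j
    refine (integrable_const ((2*C)*(2*C))).mono'
      ((hmeas_hl i).mul (hmeas_hl j)).aestronglyMeasurable (ae_of_all _ fun s => ?_)
    rw [Real.norm_eq_abs, abs_mul]
    exact mul_le_mul (hhb (s i)) (hhb (s j)) (abs_nonneg _) (le_trans (abs_nonneg (h (s i))) (hhb (s i)))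
  have second : ∫ s, (∑ i, h (s i)) ^ 2 ∂π = n * ∫ x, h x ^ 2 ∂ρ := by
    have expand : ∀ s : Fin n → S, (∑ i, h (s i)) ^ 2 = ∑ i : Fin n, ∑ j : Fin n, h (s i) * h (s j) := by
      intro s; rw [sq, Finset.sum_mul_sum]
    calc ∫ s, (∑ i, h (s i)) ^ 2 ∂π
        = ∫ s, ∑ i : Fin n, ∑ j : Fin n, h (s i) * h (s j) ∂π := by
          apply integral_congr_ae; filter_upwards with s; exact expand s
    _ = ∑ i : Fin n, ∑ j : Fin n, ∫ s, h (s i) * h (s j) ∂π := by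
          rw [integral_finset_sum _ (fun i _ => integrable_finset_sum _ (fun j _ => hint_ij i j))]
          exact Finset.sum_congr rfl fun i _ => integral_finset_sum _ (fun j _ => hint_ij i j)
    _ = ∑ i : Fin n, ∫ x, h x ^ 2 ∂ρ := by
          refine Finset.sum_congr rfl fun i _ => ?_
          rw [Finset.sum_congr rfl fun j _ => key i j]
          simp
    _ = n * ∫ x, h x ^ 2 ∂ρ := by simp [Finset.sum_const, nsmul_eq_mul]
  -- Markov
  have hsub : {s : Fin n → S | δ ≤ |(∑ i, g (s i)) / n - m|}
      ⊆ {s : Fin n → S | (δ * n) ^ 2 ≤ (∑ i, h (s i)) ^ 2} := by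
    intro s hs
    simp only [Set.mem_setOf_eq] at hs ⊢
    have hne : (n:ℝ) ≠ 0 := by positivity
    have hrw : (∑ i, g (s i)) / n - m = (∑ i, h (s i)) / n := by
      have hsum : ∑ i : Fin n, h (s i) = (∑ i, g (s i)) - n * m := by
        simp [hh, Finset.sum_sub_distrib, Finset.sum_const, mul_comm]
      rw [hsum, sub_div, mul_div_cancel_left₀ _ hne]
    rw [hrw] at hs
    have h1 : δ * n ≤ |∑ i, h (s i)| := by
      rw [abs_div, abs_of_pos (by positivity : (0:ℝ) < (n:ℝ)), le_div_iff₀ (by positivity : (0:ℝ) < (n:ℝ))] at hs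
      exact hs
    calc (δ * n)^2 ≤ |∑ i, h (s i)|^2 := pow_le_pow_left₀ (by positivity) h1 2
    _ = (∑ i, h (s i))^2 := sq_abs _
  have hX2i : Integrable (fun s => (∑ i, h (s i)) ^ 2) π := by
    refine (integrable_const ((2*C*n)^2)).mono'
      (((Finset.measurable_sum _ fun i _ => hmeas_hl i)).pow_const 2).aestronglyMeasurable
      (ae_of_all _ fun s => ?_)
    rw [Real.norm_eq_abs, abs_pow]
    refine pow_le_pow_left₀ (abs_nonneg _) ?_ 2
    calc |∑ i, h (s i)| ≤ ∑ i, |h (s i)| := Finset.abs_sum_le_sum_abs _ _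
    _ ≤ ∑ _i : Fin n, 2*C := Finset.sum_le_sum fun i _ => hhb _
    _ = 2*C*n := by simp [Finset.sum_const, mul_comm]
  have markov := mul_meas_ge_le_integral_of_nonneg
    (ae_of_all π fun s => sq_nonneg (∑ i, h (s i))) hX2i ((δ*n)^2)
  have hmono := measure_mono (μ := π) hsub
  have hC0 : 0 ≤ C := le_trans (abs_nonneg _) (hmabs)
  have hbound : (π {s | δ ≤ |(∑ i, g (s i)) / n - m|}).toReal
      ≤ (n * ∫ x, h x ^ 2 ∂ρ) / (δ*n)^2 := by
    rw [le_div_iff₀ (by positivity : (0:ℝ) < (δ*n)^2), mul_comm]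
    calc (δ*n)^2 * (π {s | δ ≤ |(∑ i, g (s i)) / n - m|}).toReal
        ≤ (δ*n)^2 * (π {s : Fin n → S | (δ * n) ^ 2 ≤ (∑ i, h (s i)) ^ 2}).toReal := by
          apply mul_le_mul_of_nonneg_left _ (by positivity)
          exact ENNReal.toReal_mono (measure_ne_top _ _) hmono
    _ ≤ ∫ s, (∑ i, h (s i)) ^ 2 ∂π := markov
    _ = n * ∫ x, h x ^ 2 ∂ρ := second
  calc (π {s | δ ≤ |(∑ i, g (s i)) / n - m|}).toReal
      ≤ (n * ∫ x, h x ^ 2 ∂ρ) / (δ*n)^2 := hbound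
  _ ≤ (n * (2*C)^2) / (δ*n)^2 := by
      gcongr
  _ = (2 * C) ^ 2 / (δ ^ 2 * n) := by
      field_simp


end cheb

section emp
variable [MeasurableSpace S] [TopologicalSpace S] [BorelSpace S] [HasOuterApproxClosed S]

lemma emp_pair {n : ℕ} [NeZero n] (s : Fin n → S) (f : S →ᵇ ℝ≥0) :
    (ProbabilityMeasure.toWeakDualBCNN (empirical s)) f = (n : ℝ≥0)⁻¹ * ∑ i, f (s i) := by
  rw [ProbabilityMeasure.toWeakDualBCNN_apply]
  have h0 : ((empirical s : ProbabilityMeasure S) : Measure S) = empMeasure s := rfl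
  rw [h0]
  unfold empMeasure
  rw [lintegral_smul_measure, lintegral_finset_sum_measure]
  have hmeas : Measurable fun x => ((f x : ℝ≥0) : ℝ≥0∞) :=
    measurable_coe_nnreal_ennreal.comp f.continuous.measurable
  have h1 : ∀ i : Fin n, ∫⁻ x, ((f x : ℝ≥0) : ℝ≥0∞) ∂(Measure.dirac (s i)) = f (s i) :=
    fun i => lintegral_dirac' _ hmeas
  simp only [h1]
  have hn : ((n : ℝ≥0) : ℝ≥0∞) ≠ 0 := by
    exact_mod_cast Nat.cast_ne_zero.mpr (NeZero.ne n)
  rw [← ENNReal.coe_finset_sum]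
  rw [show ((n : ℝ≥0∞))⁻¹ = (((n:ℝ≥0)⁻¹ : ℝ≥0) : ℝ≥0∞) by
    rw [ENNReal.coe_inv (Nat.cast_ne_zero.mpr (NeZero.ne n) : (n:ℝ≥0) ≠ 0), ENNReal.coe_natCast]]
  rw [smul_eq_mul, ← ENNReal.coe_mul, ENNReal.toNNReal_coe]

lemma inducing_pairing :
    IsInducing (fun (μ : ProbabilityMeasure S) (f : S →ᵇ ℝ≥0) => μ.toWeakDualBCNN f) := by
  have h1 : IsInducing (ProbabilityMeasure.toFiniteMeasure : ProbabilityMeasure S → FiniteMeasure S) :=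
    (ProbabilityMeasure.toFiniteMeasure_isEmbedding S).toIsInducing
  have h2 : IsInducing (FiniteMeasure.toWeakDualBCNN : FiniteMeasure S → WeakDual ℝ≥0 (S →ᵇ ℝ≥0)) :=
    (FiniteMeasure.isEmbedding_toWeakDualBCNN S).toIsInducing
  have h3 : IsInducing (fun (w : WeakDual ℝ≥0 (S →ᵇ ℝ≥0)) (f : S →ᵇ ℝ≥0) => w f) := ⟨rfl⟩
  exact h3.comp (h2.comp h1)

lemma nhds_basis (ρ : ProbabilityMeasure S) {U : Set (ProbabilityMeasure S)} (hU : U ∈ 𝓝 ρ) :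
    ∃ (t : Finset (S →ᵇ ℝ≥0)) (δ : ℝ), 0 < δ ∧
      {μ : ProbabilityMeasure S |
        ∀ f ∈ t, dist (μ.toWeakDualBCNN f) (ρ.toWeakDualBCNN f) < δ} ⊆ U := by
  have hind := inducing_pairing (S := S)
  rw [hind.nhds_eq_comap, Filter.mem_comap] at hU
  obtain ⟨V, hV, hVU⟩ := hU
  rw [nhds_pi, Filter.mem_pi'] at hV
  obtain ⟨t, W, hW, hWV⟩ := hV
  choose δf hδf hball using fun f => Metric.mem_nhds_iff.mp (hW f)
  refine ⟨t, if h : t.Nonempty then t.inf' h δf else 1, ?_, ?_⟩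
  · split
    · rename_i h
      exact (Finset.lt_inf'_iff _).mpr fun f _ => hδf f
    · exact one_pos
  · intro μ hμ
    simp only [Set.mem_setOf_eq] at hμ
    apply hVU
    refine hWV ?_
    intro f hf
    apply hball f
    rw [Metric.mem_ball]
    refine lt_of_lt_of_le (hμ f hf) ?_
    rw [dif_pos ⟨f, hf⟩]
    exact Finset.inf'_le _ hf


end emp

section parts
variable {S : Type*}

set_option linter.unusedSectionVars false

lemma part1 [MeasurableSpace S] [TopologicalSpace S] [OpensMeasurableSpace S]
    (ρ : Measure S) [IsProbabilityMeasure ρ] :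
    IsChaotic (fun n => Measure.pi fun _ : Fin n => ρ) ρ := by
  intro k φ
  apply Tendsto.congr' (f₁ := fun _ => ∏ i : Fin k, ∫ x, φ i x ∂ρ) _ tendsto_const_nhds
  filter_upwards [eventually_ge_atTop k] with n hkn
  set F : Fin n → S → ℝ := fun j x => if h : (j : ℕ) < k then φ ⟨(j : ℕ), h⟩ x else 1 with hF
  have hbij : ∀ (G : Fin k → ℝ) (H : Fin n → ℝ)
      (_ : ∀ i : Fin k, G i = H (Fin.castLE hkn i))
      (_ : ∀ j : Fin n, ¬ (j : ℕ) < k → H j = 1),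
      ∏ i : Fin k, G i = ∏ j : Fin n, H j := by
    intro G H hmatch hout
    have h1 : ∏ j ∈ Finset.univ.filter (fun j : Fin n => (j : ℕ) < k), H j
        = ∏ j : Fin n, H j := by
      apply Finset.prod_subset (Finset.filter_subset _ _)
      intro x _ hx
      simp only [Finset.mem_filter, Finset.mem_univ, true_and] at hx
      exact hout x hx
    rw [← h1]
    apply Finset.prod_bij (fun (i : Fin k) _ => Fin.castLE hkn i)
    · intro a _
      simp [Finset.mem_filter, a.isLt]
    · intro a _ b _ hab
      exact Fin.castLE_injective hkn hab
    · intro b hb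
      simp only [Finset.mem_filter, Finset.mem_univ, true_and] at hb
      exact ⟨⟨(b : ℕ), hb⟩, Finset.mem_univ _, rfl⟩
    · intro a _
      exact hmatch a
  have key : ∫ s, ∏ i : Fin k, (if h : (i : ℕ) < n then φ i (s ⟨(i : ℕ), h⟩) else 1)
        ∂(Measure.pi fun _ : Fin n => ρ) = ∏ i : Fin k, ∫ x, φ i x ∂ρ := by
    have hL : ∀ s : Fin n → S,
        (∏ i : Fin k, (if h : (i : ℕ) < n then φ i (s ⟨(i : ℕ), h⟩) else 1))
          = ∏ j : Fin n, F j (s j) := by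
      intro s
      apply hbij
      · intro i
        rw [dif_pos (lt_of_lt_of_le i.isLt hkn), hF]
        simp only [Fin.coe_castLE]
        rw [dif_pos i.isLt]
        rfl
      · intro j hj
        simp only [hF]
        rw [dif_neg hj]
    have hR : (∏ i : Fin k, ∫ x, φ i x ∂ρ) = ∏ j : Fin n, ∫ x, F j x ∂ρ := by
      apply hbij
      · intro i
        have hx : ∀ x : S, F (Fin.castLE hkn i) x = φ i x := fun x => by
          simp only [hF, Fin.coe_castLE]
          exact dif_pos i.isLt
        exact (integral_congr_ae (ae_of_all _ hx)).symm
      · intro j hj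
        have hx : ∀ x : S, F j x = (1 : ℝ) := fun x => by
          simp only [hF]
          exact dif_neg hj
        rw [integral_congr_ae (ae_of_all _ hx)]
        simp [measure_univ]
    calc ∫ s, ∏ i : Fin k, (if h : (i : ℕ) < n then φ i (s ⟨(i : ℕ), h⟩) else 1)
          ∂(Measure.pi fun _ : Fin n => ρ)
        = ∫ s, ∏ j : Fin n, F j (s j) ∂(Measure.pi fun _ : Fin n => ρ) := by
          apply integral_congr_ae; filter_upwards with s; exact hL s
      _ = ∏ j : Fin n, ∫ x, F j x ∂ρ := prod_integral_pi ρ F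
      _ = ∏ i : Fin k, ∫ x, φ i x ∂ρ := hR.symm
  exact key.symm

lemma part2 [MetricSpace S] [TopologicalSpace.SeparableSpace S] [MeasurableSpace S] [BorelSpace S]
    (ρ : ProbabilityMeasure S) (φ : ProbabilityMeasure S →ᵇ ℝ) :
    Tendsto (fun n => ∫ s, φ (empirical s) ∂(Measure.pi fun _ : Fin (n + 1) => (ρ : Measure S)))
      atTop (𝓝 (φ ρ)) := by
  rw [Metric.tendsto_nhds]
  intro ε hε
  have hε2 : 0 < ε / 2 := half_pos hε
  have hcont : Tendsto φ (𝓝 ρ) (𝓝 (φ ρ)) := φ.continuous.continuousAt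
  have hU : φ ⁻¹' Metric.ball (φ ρ) (ε / 2) ∈ 𝓝 ρ :=
    hcont (Metric.ball_mem_nhds _ hε2)
  obtain ⟨t, δ, hδ, hsub⟩ := nhds_basis ρ hU
  set g : (S →ᵇ ℝ≥0) → S → ℝ := fun f x => ((f x : ℝ≥0) : ℝ) with hgdef
  have hg_meas : ∀ f : S →ᵇ ℝ≥0, Measurable (g f) := fun f =>
    (NNReal.continuous_coe.comp f.continuous).measurable
  set C : (S →ᵇ ℝ≥0) → ℝ := fun f => dist f 0 with hCdef
  have hg_bound : ∀ (f : S →ᵇ ℝ≥0) (x : S), |g f x| ≤ C f := by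
    intro f x
    rw [abs_of_nonneg (NNReal.coe_nonneg _)]
    have h1 := BoundedContinuousFunction.dist_coe_le_dist (f := f) (g := 0) x
    rw [NNReal.dist_eq] at h1
    simpa using h1
  have hρ_pair : ∀ f : S →ᵇ ℝ≥0,
      ((ρ.toWeakDualBCNN f : ℝ≥0) : ℝ) = ∫ x, g f x ∂(ρ : Measure S) := by
    intro f
    rw [ProbabilityMeasure.toWeakDualBCNN_apply]
    exact BoundedContinuousFunction.toReal_lintegral_coe_eq_integral f _
  have hemp_pair_r : ∀ (n : ℕ) (s : Fin (n + 1) → S) (f : S →ᵇ ℝ≥0),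
      (((empirical s).toWeakDualBCNN f : ℝ≥0) : ℝ)
        = (∑ i, g f (s i)) / ((n + 1 : ℕ) : ℝ) := by
    intro n s f
    rw [emp_pair]
    push_cast
    ring
  have hdist_eq : ∀ (n : ℕ) (s : Fin (n + 1) → S) (f : S →ᵇ ℝ≥0),
      dist ((empirical s).toWeakDualBCNN f) (ρ.toWeakDualBCNN f)
        = |(∑ i, g f (s i)) / ((n + 1 : ℕ) : ℝ) - ∫ x, g f x ∂(ρ : Measure S)| := by
    intro n s f
    rw [NNReal.dist_eq, hemp_pair_r, hρ_pair]
  set Bad : (n : ℕ) → Set (Fin (n + 1) → S) := fun n =>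
    ⋃ f ∈ t, {s : Fin (n + 1) → S |
      δ ≤ |(∑ i, g f (s i)) / ((n + 1 : ℕ) : ℝ) - ∫ x, g f x ∂(ρ : Measure S)|} with hBdef
  have hBad_meas : ∀ n, MeasurableSet (Bad n) := by
    intro n
    apply Finset.measurableSet_biUnion
    intro f _
    have hD : Measurable fun s : Fin (n + 1) → S =>
        |(∑ i, g f (s i)) / ((n + 1 : ℕ) : ℝ) - ∫ x, g f x ∂(ρ : Measure S)| := by
      apply Measurable.abs
      apply Measurable.sub _ measurable_const
      apply Measurable.div _ measurable_const
      exact Finset.measurable_sum _ fun i _ => (hg_meas f).comp (measurable_pi_apply i)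
    exact measurableSet_le measurable_const hD
  have hgood : ∀ (n : ℕ) (s : Fin (n + 1) → S), s ∉ Bad n →
      dist (φ (empirical s)) (φ ρ) < ε / 2 := by
    intro n s hs
    have hin : empirical s ∈ φ ⁻¹' Metric.ball (φ ρ) (ε / 2) := by
      apply hsub
      intro f hf
      rw [hdist_eq]
      by_contra hle
      push_neg at hle
      exact hs (Set.mem_biUnion hf hle)
    simpa [Metric.mem_ball, Set.mem_preimage] using hin
  set K : ℝ := ∑ f ∈ t, (2 * C f) ^ 2 / δ ^ 2 with hKdef
  have hK0 : 0 ≤ K := Finset.sum_nonneg fun f _ => by positivity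
  have hBad_bound : ∀ n : ℕ,
      ((Measure.pi fun _ : Fin (n + 1) => (ρ : Measure S)) (Bad n)).toReal
        ≤ K / ((n + 1 : ℕ) : ℝ) := by
    intro n
    set π := Measure.pi fun _ : Fin (n + 1) => (ρ : Measure S) with hπ
    have h1 : π (Bad n) ≤ ∑ f ∈ t, π {s : Fin (n + 1) → S |
        δ ≤ |(∑ i, g f (s i)) / ((n + 1 : ℕ) : ℝ) - ∫ x, g f x ∂(ρ : Measure S)|} :=
      measure_biUnion_finset_le _ _
    calc (π (Bad n)).toReal
        ≤ ((∑ f ∈ t, π {s : Fin (n + 1) → S |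
            δ ≤ |(∑ i, g f (s i)) / ((n + 1 : ℕ) : ℝ) - ∫ x, g f x ∂(ρ : Measure S)|})).toReal := by
          apply ENNReal.toReal_mono _ h1
          exact (ENNReal.sum_lt_top.mpr fun f _ => (measure_lt_top _ _)).ne
      _ = ∑ f ∈ t, (π {s : Fin (n + 1) → S |
            δ ≤ |(∑ i, g f (s i)) / ((n + 1 : ℕ) : ℝ) - ∫ x, g f x ∂(ρ : Measure S)|}).toReal := by
          apply ENNReal.toReal_sum
          intro f _
          exact measure_ne_top _ _
      _ ≤ ∑ f ∈ t, (2 * C f) ^ 2 / (δ ^ 2 * ((n + 1 : ℕ) : ℝ)) := by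
          apply Finset.sum_le_sum
          intro f _
          exact cheb (ρ : Measure S) (g f) (hg_meas f) (C f) (hg_bound f) hδ (n + 1)
            (Nat.succ_pos n)
      _ = K / ((n + 1 : ℕ) : ℝ) := by
          rw [hKdef, Finset.sum_div]
          apply Finset.sum_congr rfl
          intro f _
          rw [div_div]
  have hemp_cont : ∀ n : ℕ, Continuous (fun s : Fin (n + 1) → S => empirical s) := by
    intro n
    rw [(inducing_pairing (S := S)).continuous_iff]
    apply continuous_pi
    intro f
    have h1 : (fun s : Fin (n + 1) → S => (empirical s).toWeakDualBCNN f)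
        = fun s : Fin (n + 1) → S => (((n + 1 : ℕ) : ℝ≥0))⁻¹ * ∑ i, f (s i) :=
      funext fun s => emp_pair s f
    show Continuous fun s : Fin (n + 1) → S => (empirical s).toWeakDualBCNN f
    rw [h1]
    exact continuous_const.mul
      (continuous_finset_sum _ fun i _ => f.continuous.comp (continuous_apply i))
  have hφ_int : ∀ n : ℕ, Integrable (fun s : Fin (n + 1) → S => φ (empirical s))
      (Measure.pi fun _ : Fin (n + 1) => (ρ : Measure S)) := by
    intro n
    refine (integrable_const ‖φ‖).mono'
      ((φ.continuous.comp (hemp_cont n)).measurable).aestronglyMeasurable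
      (ae_of_all _ fun s => ?_)
    exact φ.norm_coe_le_norm _
  have hmain : ∀ n : ℕ,
      dist (∫ s, φ (empirical s) ∂(Measure.pi fun _ : Fin (n + 1) => (ρ : Measure S))) (φ ρ)
        ≤ ε / 2 + 2 * ‖φ‖ *
          ((Measure.pi fun _ : Fin (n + 1) => (ρ : Measure S)) (Bad n)).toReal := by
    intro n
    set π := Measure.pi fun _ : Fin (n + 1) => (ρ : Measure S) with hπ
    have hconst : ∫ _s : Fin (n + 1) → S, φ ρ ∂π = φ ρ := by
      simp [measure_univ]
    have hind_int : Integrable ((Bad n).indicator fun _ => 2 * ‖φ‖) π :=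
      (integrable_const (2 * ‖φ‖)).indicator (hBad_meas n)
    have hptwise : ∀ s : Fin (n + 1) → S, ‖φ (empirical s) - φ ρ‖
        ≤ ε / 2 + (Bad n).indicator (fun _ => 2 * ‖φ‖) s := by
      intro s
      by_cases hs : s ∈ Bad n
      · rw [Set.indicator_of_mem hs]
        have h1 : ‖φ (empirical s) - φ ρ‖ ≤ ‖φ (empirical s)‖ + ‖φ ρ‖ := norm_sub_le _ _
        have h2 := φ.norm_coe_le_norm (empirical s)
        have h3 := φ.norm_coe_le_norm ρ
        linarith [hε2.le]
      · rw [Set.indicator_of_notMem hs]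
        have h1 := hgood n s hs
        rw [dist_eq_norm] at h1
        have hind : (0:ℝ) ≤ 2 * ‖φ‖ := by positivity
        linarith
    calc dist (∫ s, φ (empirical s) ∂π) (φ ρ)
        = ‖∫ s, (φ (empirical s) - φ ρ) ∂π‖ := by
          rw [dist_eq_norm, integral_sub (hφ_int n) (integrable_const _), hconst]
      _ ≤ ∫ s, ‖φ (empirical s) - φ ρ‖ ∂π := norm_integral_le_integral_norm _
      _ ≤ ∫ s, (ε / 2 + (Bad n).indicator (fun _ => 2 * ‖φ‖) s) ∂π := by
          apply integral_mono ((hφ_int n).sub (integrable_const _)).norm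
            ((integrable_const (ε / 2)).add hind_int)
          exact hptwise
      _ = ε / 2 + 2 * ‖φ‖ * (π (Bad n)).toReal := by
          rw [integral_add (integrable_const _) hind_int]
          rw [integral_indicator_const _ (hBad_meas n)]
          simp [measure_univ, mul_comm, Measure.real]
  have htend : Tendsto (fun n : ℕ => 2 * ‖φ‖ * (K / ((n + 1 : ℕ) : ℝ))) atTop (𝓝 0) := by
    have h1 : Tendsto (fun n : ℕ => K / ((n + 1 : ℕ) : ℝ)) atTop (𝓝 0) := by
      have h0 := tendsto_one_div_add_atTop_nhds_zero_nat (𝕜 := ℝ)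
      have h2 := h0.const_mul K
      simp only [mul_zero] at h2
      convert h2 using 2 with n
      push_cast
      rw [mul_one_div]
    have h3 := h1.const_mul (2 * ‖φ‖)
    simpa using h3
  have hev : ∀ᶠ n : ℕ in atTop, 2 * ‖φ‖ * (K / ((n + 1 : ℕ) : ℝ)) < ε / 2 :=
    htend.eventually_lt_const hε2
  filter_upwards [hev] with n hn
  have hb := hBad_bound n
  have h4 : 2 * ‖φ‖ * ((Measure.pi fun _ : Fin (n + 1) => (ρ : Measure S)) (Bad n)).toReal
      ≤ 2 * ‖φ‖ * (K / ((n + 1 : ℕ) : ℝ)) :=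
    mul_le_mul_of_nonneg_left hb (by positivity)
  calc dist (∫ s, φ (empirical s) ∂(Measure.pi fun _ : Fin (n + 1) => (ρ : Measure S))) (φ ρ)
      ≤ ε / 2 + 2 * ‖φ‖ *
          ((Measure.pi fun _ : Fin (n + 1) => (ρ : Measure S)) (Bad n)).toReal := hmain n
    _ ≤ ε / 2 + 2 * ‖φ‖ * (K / ((n + 1 : ℕ) : ℝ)) := by linarith
    _ < ε / 2 + ε / 2 := by linarith
    _ = ε := by ring

end parts

end Helpers

/-- The sequence of product laws ρ^{⊗n} is ρ-chaotic; equivalently the empirical measures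
of n i.i.d. ρ-samples converge in law to the constant ρ. -/
theorem stmt_5 {S : Type*} [MetricSpace S] [TopologicalSpace.SeparableSpace S]
    [MeasurableSpace S] [BorelSpace S] (ρ : ProbabilityMeasure S) :
    IsChaotic (fun n => Measure.pi fun _ : Fin n => (ρ : Measure S)) (ρ : Measure S) ∧
      ∀ φ : ProbabilityMeasure S →ᵇ ℝ,
        Tendsto (fun n => ∫ s, φ (empirical s) ∂ (Measure.pi fun _ : Fin (n + 1) => (ρ : Measure S)))
          atTop (𝓝 (φ ρ)) := by
  constructor
  · exact Helpers.part1 (ρ : Measure S)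
  · intro φ
    exact Helpers.part2 ρ φ
end
end

section
/- Let X be a Polish space, D₁ ⊆ D₂ ⊆ ⋯ Borel subsets with dense union, f_n : D_n → ℝ measurable and uniformly bounded by B, and f : X → ℝ continuous such that f_n → f uniformly on compact sets in the sense: for every compact K and ε > 0, eventually |f(d) − f_n(d)| < ε for all d ∈ D_n ∩ K. Then for every weakly convergent sequence of probability measures {μ_n} on X with μ_n(D_n) = 1 and μ_n → μ, the integrals ∫ f_n dμ_n converge to ∫ f dμ. -/
open MeasureTheory Filter Topology BoundedContinuousFunction
open scoped ENNReal NNReal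
noncomputable section
variable {S : Type*}

lemma aesm_of_subtype {X : Type*} [MeasurableSpace X] {s : Set X} (hs : MeasurableSet s)
    {f : X → ℝ} (hf : Measurable fun x : s => f x.1) (μ : Measure X) :
    AEStronglyMeasurable f (μ.restrict s) := by
  have he : MeasurableEmbedding ((↑) : s → X) := MeasurableEmbedding.subtype_coe hs
  have hm : Measurable (Function.extend ((↑) : s → X) (fun x : s => f x.1) (fun _ => 0)) :=
    he.measurable_extend hf measurable_const
  refine hm.aestronglyMeasurable.congr ?_
  filter_upwards [ae_restrict_mem hs] with x hx
  exact Subtype.val_injective.extend_apply _ _ ⟨x, hx⟩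

lemma prohorov {X : Type*} [MetricSpace X] [CompleteSpace X]
    [TopologicalSpace.SeparableSpace X] [MeasurableSpace X] [BorelSpace X] [Nonempty X]
    (μ : ℕ → ProbabilityMeasure X) (ν : ProbabilityMeasure X)
    (hw : Tendsto μ atTop (𝓝 ν)) {ε : ℝ≥0∞} (hε : 0 < ε) (hεt : ε ≠ ∞) :
    ∃ K : Set X, IsCompact K ∧ ∀ n, (μ n : Measure X) Kᶜ ≤ ε := by
  set u := TopologicalSpace.denseSeq X with hu_def
  have hu : DenseRange u := TopologicalSpace.denseRange_denseSeq X
  set V : ℕ → ℕ → Set X := fun k m => ⋃ i ∈ Finset.range m, Metric.ball (u i) (1/(k+1)) with hV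
  set F : ℕ → ℕ → Set X := fun k m => (V k m)ᶜ with hF
  have hVopen : ∀ k m, IsOpen (V k m) := fun k m =>
    isOpen_biUnion fun _ _ => Metric.isOpen_ball
  have hFclosed : ∀ k m, IsClosed (F k m) := fun k m => (hVopen k m).isClosed_compl
  have hFanti : ∀ k, Antitone (F k) := by
    intro k m m' hmm'
    apply Set.compl_subset_compl.2
    exact Set.biUnion_subset_biUnion_left (Finset.range_subset_range.2 hmm')
  have hFempty : ∀ k, ⋂ m, F k m = ∅ := by
    intro k
    rw [Set.iInter_eq_empty_iff]
    intro x
    have hr : (0:ℝ) < 1/(k+1) := by positivity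
    obtain ⟨i, hi⟩ := hu.exists_dist_lt x hr
    refine ⟨i+1, ?_⟩
    simp only [hF, Set.mem_compl_iff, not_not]
    exact Set.mem_biUnion (Finset.mem_range.2 (Nat.lt_succ_self i))
      (by rw [Metric.mem_ball]; exact hi)
  have key : ∀ (k : ℕ) (ρ : ProbabilityMeasure X),
      Tendsto (fun m => (ρ : Measure X) (F k m)) atTop (𝓝 0) := by
    intro k ρ
    have := tendsto_measure_iInter_atTop (μ := (ρ : Measure X))
      (fun m => ((hFclosed k m).measurableSet).nullMeasurableSet) (hFanti k)
      ⟨0, measure_ne_top _ _⟩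
    rwa [hFempty k, measure_empty] at this
  have step : ∀ (k : ℕ) (δ : ℝ≥0∞), 0 < δ → ∃ m, ∀ n, (μ n : Measure X) (F k m) < δ := by
    intro k δ hδ
    obtain ⟨m₀, hm₀⟩ := ((key k ν).eventually_lt_const hδ).exists
    have hls := ProbabilityMeasure.limsup_measure_closed_le_of_tendsto hw (hFclosed k m₀)
    obtain ⟨N, hN⟩ := (eventually_atTop.1
      (eventually_lt_of_limsup_lt (lt_of_le_of_lt hls hm₀)))
    have hc : ∀ n, ∃ m, (μ n : Measure X) (F k m) < δ := fun n =>
      ((key k (μ n)).eventually_lt_const hδ).exists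
    choose c hcs using hc
    refine ⟨m₀ ⊔ (Finset.range N).sup c, fun n => ?_⟩
    rcases le_or_gt N n with h | h
    · exact lt_of_le_of_lt (measure_mono (hFanti k le_sup_left)) (hN n h)
    · exact lt_of_le_of_lt (measure_mono (hFanti k
        (le_sup_of_le_right (Finset.le_sup (Finset.mem_range.2 h))))) (hcs n)
  have hδpos : ∀ k : ℕ, (0:ℝ≥0∞) < ε * 2⁻¹ ^ (k+1) := by
    intro k
    refine ENNReal.mul_pos hε.ne' ?_
    exact (pow_ne_zero _ (ENNReal.inv_ne_zero.2 ENNReal.ofNat_ne_top))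
  choose m hm using fun k => step k _ (hδpos k)
  refine ⟨closure (⋂ k, V k (m k)), ?_, ?_⟩
  · rw [isCompact_iff_totallyBounded_isComplete]
    refine ⟨TotallyBounded.closure ?_, isClosed_closure.isComplete⟩
    rw [Metric.totallyBounded_iff]
    intro r hr
    obtain ⟨k, hk⟩ := exists_nat_one_div_lt hr
    refine ⟨u '' (Finset.range (m k) : Set ℕ), (Set.toFinite _).image u, ?_⟩
    intro x hx
    have hx' : x ∈ V k (m k) := (Set.iInter_subset _ k) hx
    simp only [hV, Set.mem_iUnion] at hx'
    obtain ⟨i, hi, hxi⟩ := hx'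
    refine Set.mem_biUnion ⟨i, hi, rfl⟩ ?_
    exact Metric.mem_ball.2 ((Metric.mem_ball.1 hxi).trans hk)
  · intro n
    have h1 : (closure (⋂ k, V k (m k)))ᶜ ⊆ ⋃ k, F k (m k) := by
      rw [← Set.compl_iInter]
      exact Set.compl_subset_compl.2 subset_closure
    calc (μ n : Measure X) (closure (⋂ k, V k (m k)))ᶜ
        ≤ (μ n : Measure X) (⋃ k, F k (m k)) := measure_mono h1
      _ ≤ ∑' k, (μ n : Measure X) (F k (m k)) := measure_iUnion_le _
      _ ≤ ∑' k : ℕ, ε * 2⁻¹ ^ (k+1) := ENNReal.tsum_le_tsum fun k => (hm k n).le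
      _ = ε := by
          rw [ENNReal.tsum_mul_left]
          have : ∑' k : ℕ, (2⁻¹ : ℝ≥0∞) ^ (k+1) = 1 := by
            simp_rw [pow_succ']
            rw [ENNReal.tsum_mul_left, ENNReal.tsum_geometric, ENNReal.one_sub_inv_two, inv_inv,
              ENNReal.inv_mul_cancel two_ne_zero ENNReal.ofNat_ne_top]
          rw [this, mul_one]

/-- Lemma 4.1, [D] ⟹ [A] (X Polish): if the fₙ are uniformly bounded and converge uniformly
on compacts (relative to Dₙ) to a continuous f, then for every weakly convergent sequence
μₙ → μ of laws with μₙ(Dₙ) = 1, the integrals ∫ fₙ dμₙ converge to ∫ f dμ. -/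
theorem stmt_9 {X : Type*} [MetricSpace X] [CompleteSpace X]
    [TopologicalSpace.SeparableSpace X] [MeasurableSpace X] [BorelSpace X]
    (D : ℕ → Set X) (hmono : Monotone D) (hDm : ∀ n, MeasurableSet (D n))
    (hdense : Dense (⋃ n, D n)) (f : ℕ → X → ℝ)
    (hfm : ∀ n, Measurable fun x : D n => f n x.1)
    (B : ℝ) (hB : ∀ n, ∀ d ∈ D n, |f n d| ≤ B)
    (g : X → ℝ) (hg : Continuous g)
    (hD : ∀ K : Set X, IsCompact K → ∀ ε : ℝ, 0 < ε → ∃ N : ℕ, ∀ n ≥ N, ∀ d ∈ D n ∩ K,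
      |g d - f n d| < ε)
    (μ : ℕ → ProbabilityMeasure X) (hsupp : ∀ n, (μ n : Measure X) (D n) = 1)
    (ν : ProbabilityMeasure X)
    (hw : ∀ φ : X →ᵇ ℝ, Tendsto (fun n => ∫ x, φ x ∂ (μ n : Measure X)) atTop
      (𝓝 (∫ x, φ x ∂ (ν : Measure X)))) :
    Tendsto (fun n => ∫ x in D n, f n x ∂ (μ n : Measure X)) atTop
      (𝓝 (∫ x, g x ∂ (ν : Measure X))) := by
  haveI : Nonempty X := by
    by_contra h
    rw [not_nonempty_iff] at h
    have h1 := measure_univ (μ := (ν : Measure X))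
    rw [Set.univ_eq_empty_iff.mpr h, measure_empty] at h1
    exact zero_ne_one h1
  -- D n is nonempty
  have hDne : ∀ n, (D n).Nonempty := by
    intro n
    rw [Set.nonempty_iff_ne_empty]
    intro h
    have := hsupp n
    rw [h, measure_empty] at this
    exact zero_ne_one this
  have hB0 : 0 ≤ B := by
    obtain ⟨d, hd⟩ := hDne 0
    exact (abs_nonneg _).trans (hB 0 d hd)
  -- g is bounded by B
  have hgB : ∀ x, |g x| ≤ B := by
    have hsub : (⋃ n, D n) ⊆ {x | |g x| ≤ B} := by
      rintro x hx
      obtain ⟨n, hn⟩ := Set.mem_iUnion.1 hx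
      have hkey : ∀ ε : ℝ, 0 < ε → |g x| ≤ B + ε := by
        intro ε hε
        obtain ⟨N, hN⟩ := hD {x} isCompact_singleton ε hε
        have hx' : x ∈ D (max n N) := hmono (le_max_left n N) hn
        have h1 := hN (max n N) (le_max_right n N) x ⟨hx', rfl⟩
        calc |g x| = |f (max n N) x + (g x - f (max n N) x)| := by ring_nf
          _ ≤ |f (max n N) x| + |g x - f (max n N) x| := abs_add_le _ _
          _ ≤ B + ε := add_le_add (hB _ x hx') h1.le
      show |g x| ≤ B
      by_contra hcon
      push_neg at hcon
      have := hkey ((|g x| - B)/2) (by linarith)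
      linarith
    have hcl : IsClosed {x | |g x| ≤ B} := isClosed_le hg.abs continuous_const
    intro x
    exact hcl.closure_subset_iff.2 hsub (hdense x)
  -- bounded continuous version of g
  set G : X →ᵇ ℝ := BoundedContinuousFunction.ofNormedAddCommGroup g hg B
    (fun x => by simpa [Real.norm_eq_abs] using hgB x) with hG
  have hGg : ∀ x, G x = g x := fun x => rfl
  -- integrability of f n on D n
  have hfae : ∀ n, AEStronglyMeasurable (f n) ((μ n : Measure X).restrict (D n)) :=
    fun n => aesm_of_subtype (hDm n) (hfm n) _
  have hfint : ∀ n, IntegrableOn (f n) (D n) (μ n : Measure X) := by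
    intro n
    refine ⟨hfae n, ?_⟩
    apply HasFiniteIntegral.of_bounded (C := B)
    filter_upwards [ae_restrict_mem (hDm n)] with x hx
    simpa [Real.norm_eq_abs] using hB n x hx
  have hgint : ∀ (ρ : Measure X) [IsProbabilityMeasure ρ], Integrable g ρ := by
    intro ρ _
    simpa [hG] using (G.integrable ρ)
  -- restrict to D n is the whole measure
  have hrs : ∀ n, ((μ n : Measure X)).restrict (D n) = (μ n : Measure X) := by
    intro n
    apply Measure.restrict_eq_self_of_ae_mem
    rw [ae_iff]
    have : {x | ¬ x ∈ D n} = (D n)ᶜ := rfl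
    rw [this, measure_compl (hDm n) (measure_ne_top _ _), hsupp n, measure_univ, tsub_self]
  have key : ∀ n, ∫ x in D n, f n x ∂(μ n : Measure X) =
      (∫ x in D n, (f n x - g x) ∂(μ n : Measure X)) + ∫ x, g x ∂(μ n : Measure X) := by
    intro n
    rw [integral_sub (hfint n) ((hgint _ ).integrableOn)]
    have h0 : (μ n : Measure X) (D n)ᶜ = 0 := by
      rw [measure_compl (hDm n) (measure_ne_top _ _), hsupp n, measure_univ, tsub_self]
    have hr0 : (μ n : Measure X).restrict (D n)ᶜ = 0 := Measure.restrict_eq_zero.2 h0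
    have : ∫ x in D n, g x ∂(μ n : Measure X) = ∫ x, g x ∂(μ n : Measure X) := by
      rw [← integral_add_compl (hDm n) (hgint (μ n : Measure X))]
      have hz : (∫ x in (D n)ᶜ, g x ∂(μ n : Measure X)) = 0 := by
        simp [hr0]
      rw [hz, add_zero]
    rw [this]; ring
  simp_rw [key]
  have h2 : Tendsto (fun n => ∫ x, g x ∂(μ n : Measure X)) atTop
      (𝓝 (∫ x, g x ∂(ν : Measure X))) := by simpa [hG] using hw G
  have h1 : Tendsto (fun n => ∫ x in D n, (f n x - g x) ∂(μ n : Measure X)) atTop (𝓝 0) := by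
    rw [NormedAddCommGroup.tendsto_nhds_zero]
    intro ε hε
    set ε' : ℝ := ε / (2*B + 2) with hε'def
    have hε' : 0 < ε' := by positivity
    have htend : Tendsto μ atTop (𝓝 ν) :=
      ProbabilityMeasure.tendsto_iff_forall_integral_tendsto.2 hw
    obtain ⟨K, hKc, hK⟩ := prohorov μ ν htend (ε := ENNReal.ofReal ε')
      (by simpa using hε') ENNReal.ofReal_ne_top
    obtain ⟨N, hN⟩ := hD K hKc ε' hε'
    have hKm : MeasurableSet K := hKc.isClosed.measurableSet
    filter_upwards [eventually_ge_atTop N] with n hn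
    have hint : IntegrableOn (fun x => f n x - g x) (D n) (μ n : Measure X) :=
      (hfint n).sub ((hgint _).integrableOn)
    have hsplit : D n = (D n ∩ K) ∪ (D n \ K) := (Set.inter_union_diff _ _).symm
    have hdisj : Disjoint (D n ∩ K) (D n \ K) :=
      Set.disjoint_left.2 fun x hx hx' => hx'.2 hx.2
    rw [hsplit, setIntegral_union hdisj ((hDm n).diff hKm)
      (hint.mono_set Set.inter_subset_left) (hint.mono_set Set.diff_subset)]
    have hb1 : ‖∫ x in D n ∩ K, (f n x - g x) ∂(μ n : Measure X)‖ ≤ ε' := by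
      have := norm_setIntegral_le_of_norm_le_const_ae' (μ := (μ n : Measure X))
        (s := D n ∩ K) (f := fun x => f n x - g x) (C := ε') (measure_lt_top _ _)
        (Filter.Eventually.of_forall ?_)
      · refine this.trans ?_
        have hle : ((μ n : Measure X) (D n ∩ K)).toReal ≤ 1 := by
          rw [← ENNReal.toReal_one]
          exact ENNReal.toReal_mono ENNReal.one_ne_top prob_le_one
        calc ε' * ((μ n : Measure X) (D n ∩ K)).toReal ≤ ε' * 1 := by
              exact mul_le_mul_of_nonneg_left hle hε'.le
          _ = ε' := mul_one _
      · intro x hx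
        rw [Real.norm_eq_abs, abs_sub_comm]
        exact (hN n hn x hx).le
    have hb2 : ‖∫ x in D n \ K, (f n x - g x) ∂(μ n : Measure X)‖ ≤ 2*B*ε' := by
      have hmes : ((μ n : Measure X) (D n \ K)).toReal ≤ ε' := by
        apply ENNReal.toReal_le_of_le_ofReal hε'.le
        exact le_trans (measure_mono (fun x hx => hx.2)) (hK n)
      have := norm_setIntegral_le_of_norm_le_const_ae' (μ := (μ n : Measure X))
        (s := D n \ K) (f := fun x => f n x - g x) (C := 2*B) (measure_lt_top _ _)
        (Filter.Eventually.of_forall ?_)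
      · refine this.trans ?_
        exact mul_le_mul_of_nonneg_left hmes (by positivity)
      · intro x hx
        rw [Real.norm_eq_abs]
        calc |f n x - g x| ≤ |f n x| + |g x| := abs_sub _ _
          _ ≤ B + B := add_le_add (hB n x hx.1) (hgB x)
          _ = 2*B := by ring
    calc ‖(∫ x in D n ∩ K, (f n x - g x) ∂(μ n : Measure X)) +
          ∫ x in D n \ K, (f n x - g x) ∂(μ n : Measure X)‖
        ≤ ‖∫ x in D n ∩ K, (f n x - g x) ∂(μ n : Measure X)‖ +
          ‖∫ x in D n \ K, (f n x - g x) ∂(μ n : Measure X)‖ := norm_add_le _ _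
      _ ≤ ε' + 2*B*ε' := add_le_add hb1 hb2
      _ = ε' * (2*B + 1) := by ring
      _ < ε' * (2*B + 2) := by
          exact mul_lt_mul_of_pos_left (by linarith) hε'
      _ = ε := by rw [hε'def]; field_simp
  simpa using h1.add h2
end
end

section
/- Let S and T be separable metric spaces and K_n a Markov transition kernel from S^n to T^n satisfying the permutation-equivariance K_n(π·s, π·A) = K_n(s, A) for all permutations π, points s ∈ S^n, and Borel A ⊆ T^n. Then the map H_n(ζ, G) := ∫ J_n(ζ, ds) K_n(s, ε_n^{-1}(G)), where J_n(ζ,·) is the uniform law on the finite set ε_n^{-1}({ζ}) ⊆ S^n, defines a Markov transition kernel from ε_n(S^n) ⊆ P(S) to ε_n(T^n) ⊆ P(T). Moreover, for every s ∈ S^n, the symmetrization K̃_n(s,·) of K_n(s,·) satisfies K̃_n(s,·) ∘ ε_n^{-1} = H_n(ε_n(s), ·). -/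
open MeasureTheory Filter Topology BoundedContinuousFunction
open scoped ENNReal NNReal
noncomputable section
variable {S : Type*}

section AuxPerm
variable {α : Type*}

lemma exists_perm_comp_eq : ∀ {n : ℕ} {f g : Fin n → α},
    (List.ofFn f).Perm (List.ofFn g) → ∃ σ : Equiv.Perm (Fin n), f = g ∘ σ := by
  intro n
  induction n with
  | zero => exact fun _ => ⟨1, funext fun i => i.elim0⟩
  | succ n ih =>
    intro f g h
    have hf0 : f 0 ∈ List.ofFn g := h.mem_iff.mp (by simp [List.mem_ofFn])
    rw [List.mem_ofFn] at hf0
    obtain ⟨j, hj⟩ := hf0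
    have h₁ : (List.ofFn f).Perm (List.ofFn (g ∘ Equiv.swap 0 j)) :=
      h.trans (Equiv.Perm.ofFn_comp_perm (Equiv.swap 0 j) g).symm
    rw [List.ofFn_succ, List.ofFn_succ (f := g ∘ Equiv.swap 0 j)] at h₁
    have hg₁0 : (g ∘ Equiv.swap 0 j) 0 = f 0 := by simp [hj]
    rw [hg₁0] at h₁
    obtain ⟨σ', hσ'⟩ := ih h₁.cons_inv
    refine ⟨Equiv.Perm.decomposeFin.symm (j, σ'), funext fun i => ?_⟩
    refine Fin.cases ?_ (fun k => ?_) i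
    · simp [Equiv.Perm.decomposeFin_symm_apply_zero, hj]
    · have hk := congrFun hσ' k
      simp only [Function.comp_apply] at hk ⊢
      rw [Equiv.Perm.decomposeFin_symm_apply_succ, hk]

end AuxPerm

section AuxEmp
variable {α : Type*} [MeasurableSpace α]

lemma empirical_comp_perm {n : ℕ} [NeZero n] (π : Equiv.Perm (Fin n)) (u : Fin n → α) :
    empirical (fun i => u (π i)) = empirical u := by
  apply Subtype.ext
  simp only [empirical, empMeasure]
  congr 1
  exact Equiv.sum_comp π (fun i => Measure.dirac (u i))

lemma measurable_empirical {n : ℕ} [NeZero n] :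
    Measurable (fun s : Fin n → α => empirical s) := by
  apply Measurable.subtype_mk
  apply Measure.measurable_of_measurable_coe
  intro A hA
  simp only [empMeasure, Measure.smul_apply, Measure.finset_sum_apply, smul_eq_mul]
  apply Measurable.const_mul
  apply Finset.measurable_sum
  intro i _
  simp_rw [Measure.dirac_apply' _ hA]
  exact (measurable_one.indicator hA).comp (measurable_pi_apply i)

lemma exists_perm_of_empirical_eq [MeasurableSingletonClass α] {n : ℕ} [NeZero n]
    {f g : Fin n → α} (h : empirical f = empirical g) :
    ∃ σ : Equiv.Perm (Fin n), f = g ∘ σ := by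
  classical
  have hm : empMeasure f = empMeasure g := congrArg Subtype.val h
  have hcard : ∀ x : α, (Finset.univ.filter (fun i => x = f i)).card
      = (Finset.univ.filter (fun i => x = g i)).card := by
    intro x
    have hx' : empMeasure f {x} = empMeasure g {x} := by rw [hm]
    have key : ∀ u : Fin n → α, empMeasure u {x}
        = (n : ℝ≥0∞)⁻¹ * ((Finset.univ.filter (fun i => x = u i)).card : ℝ≥0∞) := by
      intro u
      simp only [empMeasure, Measure.smul_apply, Measure.finset_sum_apply, smul_eq_mul]
      congr 1
      have : ∀ i : Fin n, Measure.dirac (u i) {x} = if x = u i then 1 else 0 := by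
        intro i
        rw [Measure.dirac_apply' _ (measurableSet_singleton x)]
        simp only [Set.indicator_apply, Set.mem_singleton_iff, Pi.one_apply]
        by_cases hux : x = u i <;> simp [hux, Ne.symm, eq_comm]
      simp_rw [this]
      rw [Finset.sum_boole]
    rw [key, key] at hx'
    rw [ENNReal.mul_right_inj (by simp) (by simp [NeZero.ne n])] at hx'
    exact_mod_cast hx'
  have hml : (List.ofFn f).Perm (List.ofFn g) := by
    rw [List.perm_iff_count]
    intro x
    have hc : ∀ u : Fin n → α, (List.ofFn u).count x
        = (Finset.univ.filter (fun i => x = u i)).card := by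
      intro u
      rw [← Multiset.coe_count]
      have : (↑(List.ofFn u) : Multiset α) = Multiset.map u Finset.univ.val := by
        rw [List.ofFn_eq_map]
        rfl
      rw [this, Multiset.count_map]
      rfl
    rw [hc, hc, hcard]
  exact exists_perm_comp_eq hml

end AuxEmp

open ProbabilityTheory in
/-- The uniform law on the fiber of the empirical measure map over ζ ∈ εₙ(Sⁿ). -/
def fiberUniform {S : Type*} [MeasurableSpace S] {n : ℕ} [NeZero n]
    (ζ : ProbabilityMeasure S) : Measure (Fin n → S) :=
  uniformOn ((fun s : Fin n → S => empirical s) ⁻¹' {ζ})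

/-- The induced transition H_n(ζ, ·) = ∫ J_n(ζ, ds) K_n(s, εₙ⁻¹(·)), as a measure on P(T). -/
def inducedTransition {S T : Type*} [MeasurableSpace S] [MeasurableSpace T] {n : ℕ} [NeZero n]
    (K : ProbabilityTheory.Kernel (Fin n → S) (Fin n → T))
    (ζ : ProbabilityMeasure S) : Measure (ProbabilityMeasure T) :=
  (fiberUniform ζ).bind (fun s => (K s).map (fun t : Fin n → T => empirical t))


open ProbabilityTheory in
lemma kernel_comp_perm {S T : Type*} [MeasurableSpace S] [MeasurableSpace T] {n : ℕ}
    (K : Kernel (Fin n → S) (Fin n → T))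
    (hequiv : ∀ (π : Equiv.Perm (Fin n)) (s : Fin n → S) (A : Set (Fin n → T)),
      MeasurableSet A →
      K (fun i => s (π i)) {u : Fin n → T | (fun i => u (π.symm i)) ∈ A} = K s A)
    (π : Equiv.Perm (Fin n)) (s : Fin n → S) :
    (K (fun i => s (π i)) : Measure (Fin n → T)) =
      (K s : Measure (Fin n → T)).map (fun u i => u (π i)) := by
  have hπm : Measurable (fun u : Fin n → T => fun i => u (π i)) :=
    measurable_pi_lambda _ fun i => measurable_pi_apply _
  ext A hA
  rw [Measure.map_apply hπm hA, ← hequiv π s _ (hπm hA)]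
  congr 1
  ext u
  simp [Set.mem_preimage]

lemma symmetrize_map_empirical {T : Type*} [MeasurableSpace T] {n : ℕ} [NeZero n]
    (ρ : Measure (Fin n → T)) :
    (symmetrize ρ).map (fun t : Fin n → T => empirical t)
      = ρ.map (fun t : Fin n → T => empirical t) := by
  ext A hA
  rw [Measure.map_apply measurable_empirical hA, Measure.map_apply measurable_empirical hA]
  simp only [symmetrize, Measure.smul_apply, Measure.finset_sum_apply, smul_eq_mul]
  have hterm : ∀ π : Equiv.Perm (Fin n),
      (ρ.map (fun u : Fin n → T => fun i => u (π i)))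
          ((fun t : Fin n → T => empirical t) ⁻¹' A)
        = ρ ((fun t : Fin n → T => empirical t) ⁻¹' A) := by
    intro π
    have hπm : Measurable (fun u : Fin n → T => fun i => u (π i)) :=
      measurable_pi_lambda _ fun i => measurable_pi_apply _
    rw [Measure.map_apply hπm (measurable_empirical hA)]
    congr 1
    ext u
    simp only [Set.mem_preimage]
    rw [empirical_comp_perm]
  rw [Finset.sum_congr rfl fun π _ => hterm π, Finset.sum_const, Finset.card_univ,
    Fintype.card_perm, Fintype.card_fin, nsmul_eq_mul, ← mul_assoc,
    ENNReal.inv_mul_cancel (by exact_mod_cast Nat.factorial_ne_zero n) (by simp), one_mul]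

open ProbabilityTheory in
lemma inducedTransition_empirical_eq {S T : Type*}
    [MeasurableSpace S] [MeasurableSingletonClass S] [MeasurableSpace T] {n : ℕ} [NeZero n]
    (K : Kernel (Fin n → S) (Fin n → T)) [IsMarkovKernel K]
    (hequiv : ∀ (π : Equiv.Perm (Fin n)) (s : Fin n → S) (A : Set (Fin n → T)),
      MeasurableSet A →
      K (fun i => s (π i)) {u : Fin n → T | (fun i => u (π.symm i)) ∈ A} = K s A)
    (s : Fin n → S) :
    inducedTransition K (empirical s)
      = (K s : Measure (Fin n → T)).map (fun t : Fin n → T => empirical t) := by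
  classical
  have hFsub : (fun s' : Fin n → S => empirical s') ⁻¹' {empirical s}
      ⊆ Set.range (fun σ : Equiv.Perm (Fin n) => s ∘ σ) := by
    intro s' hs'
    obtain ⟨σ, hσ⟩ := exists_perm_of_empirical_eq (hs' : empirical s' = empirical s)
    exact ⟨σ, hσ.symm⟩
  have hFfin : ((fun s' : Fin n → S => empirical s') ⁻¹' {empirical s}).Finite :=
    (Set.finite_range _).subset hFsub
  have hFne : ((fun s' : Fin n → S => empirical s') ⁻¹' {empirical s}).Nonempty := ⟨s, rfl⟩
  have hFm : MeasurableSet ((fun s' : Fin n → S => empirical s') ⁻¹' {empirical s}) :=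
    hFfin.measurableSet
  haveI hP : IsProbabilityMeasure (fiberUniform (n := n) (empirical s)) :=
    uniformOn_isProbabilityMeasure hFfin hFne
  have hmeas : Measurable (fun s' : Fin n → S =>
      (K s' : Measure (Fin n → T)).map (fun t : Fin n → T => empirical t)) :=
    (Measure.measurable_map _ measurable_empirical).comp K.measurable
  have hconst : ∀ s' ∈ (fun s' : Fin n → S => empirical s') ⁻¹' {empirical s},
      (K s' : Measure (Fin n → T)).map (fun t : Fin n → T => empirical t)
        = (K s : Measure (Fin n → T)).map (fun t : Fin n → T => empirical t) := by
    intro s' hs'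
    obtain ⟨σ, hσ⟩ := exists_perm_of_empirical_eq (hs' : empirical s' = empirical s)
    have hs'' : s' = fun i => s (σ i) := hσ
    have hσm : Measurable (fun u : Fin n → T => fun i => u (σ i)) :=
      measurable_pi_lambda _ fun i => measurable_pi_apply _
    rw [hs'', kernel_comp_perm K hequiv σ s, Measure.map_map measurable_empirical hσm]
    congr 1
    funext u
    exact empirical_comp_perm σ u
  ext A hA
  rw [inducedTransition, Measure.bind_apply hA hmeas.aemeasurable]
  have h0 : fiberUniform (n := n) (empirical s)
      (((fun s' : Fin n → S => empirical s') ⁻¹' {empirical s})ᶜ) = 0 := by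
    simp only [fiberUniform, ProbabilityTheory.uniformOn]
    rw [ProbabilityTheory.cond_apply hFm]
    simp
  have hae : ∀ᵐ s' ∂(fiberUniform (n := n) (empirical s)),
      ((K s' : Measure (Fin n → T)).map (fun t : Fin n → T => empirical t)) A
        = ((K s : Measure (Fin n → T)).map (fun t : Fin n → T => empirical t)) A := by
    rw [ae_iff]
    refine measure_mono_null (fun x hx => ?_) h0
    simp only [Set.mem_compl_iff]
    intro hxF
    exact hx (by rw [hconst x hxF])
  rw [lintegral_congr_ae hae, lintegral_const, measure_univ, mul_one]

/-- The induced transitions Hₙ form a Markov transition from εₙ(Sⁿ) to εₙ(Tⁿ), and the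
symmetrization of Kₙ(s,·) pushes forward under εₙ to Hₙ(εₙ(s),·). -/
theorem stmt_13 {S T : Type*} [MetricSpace S] [TopologicalSpace.SeparableSpace S]
    [MeasurableSpace S] [BorelSpace S]
    [MetricSpace T] [TopologicalSpace.SeparableSpace T] [MeasurableSpace T] [BorelSpace T]
    (n : ℕ) [NeZero n]
    (K : ProbabilityTheory.Kernel (Fin n → S) (Fin n → T))
    [ProbabilityTheory.IsMarkovKernel K]
    (hequiv : ∀ (π : Equiv.Perm (Fin n)) (s : Fin n → S) (A : Set (Fin n → T)),
      MeasurableSet A →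
      K (fun i => s (π i)) {u : Fin n → T | (fun i => u (π.symm i)) ∈ A} = K s A) :
    (∀ s : Fin n → S,
        IsProbabilityMeasure (inducedTransition K (empirical s)) ∧
        inducedTransition K (empirical s)
          (Set.range (fun t : Fin n → T => empirical t)) = 1) ∧
      Measurable (fun s : Fin n → S => inducedTransition K (empirical s)) ∧
      ∀ s : Fin n → S,
        (symmetrize (K s : Measure (Fin n → T))).map (fun t : Fin n → T => empirical t) =
          inducedTransition K (empirical s) := by
  have key : ∀ s : Fin n → S, inducedTransition K (empirical s)
      = (K s : Measure (Fin n → T)).map (fun t : Fin n → T => empirical t) :=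
    fun s => inducedTransition_empirical_eq K hequiv s
  refine ⟨fun s => ?_, ?_, fun s => ?_⟩
  · constructor
    · rw [key s]
      exact Measure.isProbabilityMeasure_map measurable_empirical.aemeasurable
    · rw [key s]
      haveI : IsProbabilityMeasure
          ((K s : Measure (Fin n → T)).map (fun t : Fin n → T => empirical t)) :=
        Measure.isProbabilityMeasure_map measurable_empirical.aemeasurable
      refine le_antisymm prob_le_one ?_
      have h1 := Measure.le_map_apply (μ := (K s : Measure (Fin n → T)))
        measurable_empirical.aemeasurable (Set.range (fun t : Fin n → T => empirical t))
      rw [Set.preimage_range, measure_univ] at h1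
      exact h1
  · have heq : (fun s : Fin n → S => inducedTransition K (empirical s))
        = fun s => (K s : Measure (Fin n → T)).map (fun t : Fin n → T => empirical t) :=
      funext key
    rw [heq]
    exact (Measure.measurable_map _ measurable_empirical).comp K.measurable
  · rw [symmetrize_map_empirical, key s]
end
end

section
/- Let S = {0,1} and define Markov kernels K_n on S^n by K_n(s,·) = δ_{(0,…,0)} if s = (0,…,0), and K_n(s,·) = δ_{(1,…,1)} otherwise. Then (a) for every ρ ∈ P(S), the sequence {∫ K_n(s,·) ρ^{⊗n}(ds)} is chaotic (chaos propagates for purely product initial data), but (b) there exists a δ(0)-chaotic sequence of symmetric laws {ρ_n} for which {∫ K_n(s,·) ρ_n(ds)} is not chaotic; hence {K_n} does not propagate chaos in the strong sense. -/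
open MeasureTheory Filter Topology BoundedContinuousFunction
open scoped ENNReal NNReal
noncomputable section
variable {S : Type*}

/-- The kernel on {0,1}ⁿ that sends (0,…,0) to δ_{(0,…,0)} and every other state to
δ_{(1,…,1)} (with false = 0, true = 1). -/
def flipKernel (n : ℕ) (s : Fin n → Bool) : Measure (Fin n → Bool) :=
  if s = (fun _ => false) then Measure.dirac (fun _ => false)
  else Measure.dirac (fun _ => true)

/-! ### Auxiliary material for the proof -/

/-- The deterministic map underlying `flipKernel`. -/
def Fl (n : ℕ) (s : Fin n → Bool) : Fin n → Bool :=
  if s = (fun _ => false) then (fun _ => false) else (fun _ => true)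

lemma bind_flip (n : ℕ) (μ : Measure (Fin n → Bool)) :
    μ.bind (flipKernel n) = μ.map (Fl n) := by
  have : flipKernel n = fun s => Measure.dirac (Fl n s) := by
    funext s; simp [flipKernel, Fl, apply_ite Measure.dirac]
  rw [this]
  exact Measure.bind_dirac_eq_map μ (.of_discrete)

lemma integral_bind_flip (n : ℕ) (μ : Measure (Fin n → Bool)) [IsProbabilityMeasure μ]
    (g : (Fin n → Bool) → ℝ) :
    ∫ s, g s ∂(μ.bind (flipKernel n))
      = (μ {fun _ => false}).toReal * g (fun _ => false)
        + (1 - (μ {fun _ => false}).toReal) * g (fun _ => true) := by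
  rw [bind_flip, integral_map (Measurable.of_discrete (f := Fl n)).aemeasurable
    (Measurable.of_discrete (f := g)).aestronglyMeasurable]
  have hA : MeasurableSet ({fun _ => false} : Set (Fin n → Bool)) := .of_discrete
  rw [← integral_add_compl hA (Integrable.of_finite)]
  have h1 : ∫ s in {fun _ => false}, g (Fl n s) ∂μ
      = (μ {fun _ => false}).toReal * g (fun _ => false) := by
    rw [setIntegral_congr_fun hA (g := fun _ => g (fun _ => false))
      (by intro s hs; simp only [Set.mem_singleton_iff] at hs; simp [Fl, hs]),
      setIntegral_const, measureReal_def, smul_eq_mul, mul_comm]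
  have h2 : ∫ s in {fun _ => false}ᶜ, g (Fl n s) ∂μ
      = (1 - (μ {fun _ => false}).toReal) * g (fun _ => true) := by
    rw [setIntegral_congr_fun hA.compl (g := fun _ => g (fun _ => true))
      (by intro s hs; simp only [Set.mem_compl_iff, Set.mem_singleton_iff] at hs; simp [Fl, hs]),
      setIntegral_const, measureReal_def, measure_compl hA (measure_ne_top _ _), measure_univ,
      ENNReal.toReal_sub_of_le prob_le_one (by simp), ENNReal.toReal_one, smul_eq_mul, mul_comm]
  rw [h1, h2]

lemma prodk {k n : ℕ} (h : k ≤ n) (φ : Fin k → (Bool →ᵇ ℝ)) (c : Bool) :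
    (∏ i : Fin k, if h' : (i : ℕ) < n then φ i ((fun _ => c) (⟨i, h'⟩ : Fin n)) else 1)
      = ∏ i, φ i c := by
  refine Finset.prod_congr rfl fun i _ => ?_
  rw [dif_pos (lt_of_lt_of_le i.isLt h)]

lemma pi_mass (ρ : Measure Bool) [IsProbabilityMeasure ρ] (n : ℕ) :
    (Measure.pi fun _ : Fin n => ρ) {fun _ => false} = ρ {false} ^ n := by
  have h : ({fun _ => false} : Set (Fin n → Bool)) = Set.pi Set.univ (fun _ => {false}) := by
    ext s; simp [funext_iff, Set.mem_pi]
  rw [h, Measure.pi_pi]; simp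

/-- The `j`-th "unit vector" in `{0,1}ⁿ`. -/
def eVec (n : ℕ) (j : Fin n) : Fin n → Bool := fun i => decide (i = j)

/-- The mixture `½ δ₀ + ½·(uniform over the unit vectors)`. -/
def badM (n : ℕ) : Measure (Fin n → Bool) :=
  (2 : ℝ≥0∞)⁻¹ • Measure.dirac (fun _ => false)
    + (2 * n : ℝ≥0∞)⁻¹ • ∑ j : Fin n, Measure.dirac (eVec n j)

def rhoB (n : ℕ) : Measure (Fin n → Bool) :=
  if n = 0 then Measure.dirac (fun _ => false) else badM n

lemma two_n_inv_mul (n : ℕ) (hn : n ≠ 0) : (2 * n : ℝ≥0∞)⁻¹ * n = 2⁻¹ := by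
  rw [ENNReal.mul_inv (Or.inl (by norm_num)) (Or.inl (by norm_num)), mul_assoc,
    ENNReal.inv_mul_cancel (by exact_mod_cast hn) (by simp), mul_one]

instance rhoB_prob (n : ℕ) : IsProbabilityMeasure (rhoB n) := by
  constructor
  unfold rhoB badM
  split
  · simp
  · rename_i hn
    simp only [Measure.add_apply, Measure.smul_apply, Measure.finset_sum_apply,
      measure_univ, smul_eq_mul, mul_one, Finset.sum_const, Finset.card_univ,
      Fintype.card_fin, nsmul_eq_mul]
    rw [two_n_inv_mul n hn, ENNReal.inv_two_add_inv_two]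

lemma rhoB_mass (n : ℕ) (hn : n ≠ 0) : rhoB n {fun _ => false} = 2⁻¹ := by
  have he : ∀ j : Fin n,
      Measure.dirac (eVec n j) ({fun _ => false} : Set (Fin n → Bool)) = 0 := by
    intro j
    rw [Measure.dirac_apply' _ (MeasurableSet.of_discrete)]
    have : eVec n j ∉ ({fun _ => false} : Set (Fin n → Bool)) := by
      simp only [Set.mem_singleton_iff, funext_iff, not_forall]
      exact ⟨j, by simp [eVec]⟩
    simp [Set.indicator_of_notMem this]
  rw [rhoB, if_neg hn]
  simp only [badM, Measure.add_apply, Measure.smul_apply, Measure.finset_sum_apply, he,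
    Finset.sum_const_zero, mul_zero, smul_eq_mul]
  rw [Measure.dirac_apply' _ (MeasurableSet.of_discrete)]
  simp

lemma rhoB_integral (n : ℕ) (hn : n ≠ 0) (g : (Fin n → Bool) → ℝ) :
    ∫ s, g s ∂(rhoB n)
      = 2⁻¹ * g (fun _ => false) + (2 * (n : ℝ))⁻¹ * ∑ j : Fin n, g (eVec n j) := by
  rw [rhoB, if_neg hn, badM]
  have int1 : Integrable g ((2 : ℝ≥0∞)⁻¹ • Measure.dirac (fun _ => false) :
      Measure (Fin n → Bool)) :=
    (Integrable.of_finite).smul_measure (by simp [hn])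
  have int2 : Integrable g ((2 * n : ℝ≥0∞)⁻¹ • ∑ j : Fin n, Measure.dirac (eVec n j) :
      Measure (Fin n → Bool)) :=
    (integrable_finset_sum_measure.2 fun j _ => Integrable.of_finite).smul_measure (by simp [hn])
  rw [integral_add_measure int1 int2, integral_smul_measure, integral_smul_measure,
    integral_finset_sum_measure (fun j _ => Integrable.of_finite)]
  simp only [integral_dirac, smul_eq_mul]
  congr 1
  · congr 1
    simp [ENNReal.toReal_inv]
  · congr 1
    rw [ENNReal.toReal_inv]
    norm_num

lemma rhoB_symm (n : ℕ) (π : Equiv.Perm (Fin n)) :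
    (rhoB n).map (fun s i => s (π i)) = rhoB n := by
  have hT : Measurable (fun (s : Fin n → Bool) i => s (π i)) := .of_discrete
  have hconst : (Measure.dirac (fun _ => false) : Measure (Fin n → Bool)).map
      (fun s i => s (π i)) = Measure.dirac (fun _ => false) := by
    rw [Measure.map_dirac' hT]
  have hsum : (∑ j : Fin n, Measure.dirac (eVec n j)).map (fun s i => s (π i))
      = ∑ j : Fin n, Measure.dirac (eVec n j) := by
    rw [← Measure.mapₗ_apply_of_measurable hT, map_sum]
    simp_rw [Measure.mapₗ_apply_of_measurable hT, Measure.map_dirac' hT]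
    have hpt : ∀ j, (fun i => eVec n j (π i)) = eVec n (π.symm j) := by
      intro j; funext i
      simp only [eVec]
      exact decide_eq_decide.2 (Equiv.apply_eq_iff_eq_symm_apply π)
    simp_rw [hpt]
    exact Equiv.sum_comp π.symm (fun j => Measure.dirac (eVec n j))
  unfold rhoB badM
  split
  · exact hconst
  · rw [Measure.map_add _ _ hT, Measure.map_smul, Measure.map_smul, hconst, hsum]

lemma tendLim (P0 C : ℝ) (k : ℕ) :
    Tendsto (fun n : ℕ => 2⁻¹ * P0 + (2 * (n : ℝ))⁻¹ * (C + ((n : ℝ) - k) * P0))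
      atTop (𝓝 P0) := by
  have h0 : Tendsto (fun n : ℕ => ((n : ℝ))⁻¹) atTop (𝓝 0) :=
    tendsto_inv_atTop_nhds_zero_nat
  have lim2 : Tendsto (fun n : ℕ => 2⁻¹ * P0 + (((n : ℝ))⁻¹ * ((C - k * P0) / 2) + 2⁻¹ * P0))
      atTop (𝓝 (2⁻¹ * P0 + (0 * ((C - k * P0) / 2) + 2⁻¹ * P0))) :=
    tendsto_const_nhds.add ((h0.mul_const _).add tendsto_const_nhds)
  have heq : (fun n : ℕ => 2⁻¹ * P0 + (((n : ℝ))⁻¹ * ((C - k * P0) / 2) + 2⁻¹ * P0))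
      =ᶠ[atTop] (fun n : ℕ => 2⁻¹ * P0 + (2 * (n : ℝ))⁻¹ * (C + ((n : ℝ) - k) * P0)) := by
    filter_upwards [eventually_atTop.2 ⟨1, fun n hn => hn⟩] with n hn
    have hn' : (n : ℝ) ≠ 0 := Nat.cast_ne_zero.2 (Nat.one_le_iff_ne_zero.1 hn)
    field_simp
    ring
  have := lim2.congr' heq
  convert this using 2
  ring

lemma eVec_prod {k n : ℕ} (hkn : k ≤ n) (φ : Fin k → (Bool →ᵇ ℝ)) (j : Fin n) :
    (∏ i : Fin k, if h' : (i : ℕ) < n then φ i (eVec n j ⟨i, h'⟩) else 1)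
      = ∏ i : Fin k, φ i (decide ((i : ℕ) = (j : ℕ))) := by
  refine Finset.prod_congr rfl fun i _ => ?_
  rw [dif_pos (lt_of_lt_of_le i.isLt hkn)]
  congr 1
  simp [eVec, Fin.ext_iff]

lemma eVec_sum {k n : ℕ} (hkn : k ≤ n) (φ : Fin k → (Bool →ᵇ ℝ)) :
    ∑ j : Fin n, (∏ i : Fin k, φ i (decide ((i : ℕ) = (j : ℕ))))
      = (∑ j ∈ Finset.range k, ∏ i : Fin k, φ i (decide ((i : ℕ) = j)))
        + ((n : ℝ) - k) * ∏ i : Fin k, φ i false := by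
  set R : ℕ → ℝ := fun j => ∏ i : Fin k, φ i (decide ((i : ℕ) = j)) with hR
  have h1 : ∑ j : Fin n, R (j : ℕ) = ∑ j ∈ Finset.range n, R j :=
    Fin.sum_univ_eq_sum_range R n
  have h2 : ∑ j ∈ Finset.range n, R j
      = ∑ j ∈ Finset.range k, R j + ∑ j ∈ Finset.Ico k n, R j := by
    simp only [Finset.range_eq_Ico]
    exact (Finset.sum_Ico_consecutive _ (Nat.zero_le k) hkn).symm
  have h4 : ∀ j ∈ Finset.Ico k n, R j = ∏ i : Fin k, φ i false := by
    intro j hj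
    refine Finset.prod_congr rfl fun i _ => ?_
    congr 1
    have : (i : ℕ) ≠ j := by
      have := (Finset.mem_Ico.1 hj).1; omega
    simp [this]
  have h3 : ∑ j ∈ Finset.Ico k n, R j = ((n : ℝ) - k) * ∏ i : Fin k, φ i false := by
    rw [Finset.sum_congr rfl h4, Finset.sum_const, Nat.card_Ico, nsmul_eq_mul,
      Nat.cast_sub hkn]
  rw [h1, h2, h3]

/-- The indicator of `true` as a bounded continuous function on `Bool`. -/
def chi : Bool →ᵇ ℝ :=
  ⟨⟨fun b => if b then 1 else 0, continuous_of_discreteTopology⟩, 2, by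
    intro x y; cases x <;> cases y <;> simp [Real.dist_eq]⟩

lemma chi_false : chi false = 0 := rfl
lemma chi_true : chi true = 1 := rfl

/-- This kernel propagates chaos in the weak sense (for product initial data) but not in
the strong sense: some δ(0)-chaotic sequence of symmetric laws is not mapped to a chaotic
sequence. -/
theorem stmt_17 :
    (∀ ρ : ProbabilityMeasure Bool, ∃ τ : ProbabilityMeasure Bool,
        IsChaotic
          (fun n => (Measure.pi fun _ : Fin n => (ρ : Measure Bool)).bind (flipKernel n))
          (τ : Measure Bool)) ∧
      ∃ ρs : ∀ n, ProbabilityMeasure (Fin n → Bool),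
        (∀ n, IsSymmetric (ρs n : Measure (Fin n → Bool))) ∧
        IsChaotic (fun n => (ρs n : Measure (Fin n → Bool))) (Measure.dirac false) ∧
        ¬ ∃ τ : ProbabilityMeasure Bool,
            IsChaotic (fun n => (ρs n : Measure (Fin n → Bool)).bind (flipKernel n))
              (τ : Measure Bool) := by
  constructor
  · -- Part (a)
    intro ρ
    by_cases h1 : (ρ : Measure Bool) {false} = 1
    · refine ⟨⟨Measure.dirac false, inferInstance⟩, fun k φ => ?_⟩
      have key : ∀ n, k ≤ n →
          (∫ s, ∏ i : Fin k, (if h : (i : ℕ) < n then φ i (s ⟨i, h⟩) else 1)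
            ∂ (Measure.pi fun _ : Fin n => (ρ : Measure Bool)).bind (flipKernel n))
          = ∏ i, φ i false := by
        intro n hn
        rw [integral_bind_flip, pi_mass _ n, h1, prodk hn φ false, prodk hn φ true]
        simp
      have hd : (∏ i : Fin k, ∫ x, φ i x ∂(Measure.dirac false : Measure Bool))
          = ∏ i, φ i false :=
        Finset.prod_congr rfl fun i _ => integral_dirac _ _
      show Tendsto _ atTop (𝓝 (∏ i : Fin k, ∫ x, φ i x ∂(Measure.dirac false : Measure Bool)))
      rw [hd]
      exact tendsto_const_nhds.congr' (by filter_upwards [eventually_atTop.2 ⟨k, key⟩] with n h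
        using h.symm)
    · refine ⟨⟨Measure.dirac true, inferInstance⟩, fun k φ => ?_⟩
      set p : ℝ := ((ρ : Measure Bool) {false}).toReal with hp
      have hp0 : 0 ≤ p := ENNReal.toReal_nonneg
      have hp1 : p < 1 := by
        rcases lt_or_eq_of_le (prob_le_one (μ := (ρ : Measure Bool)) (s := {false})) with h | h
        · rw [hp, ← ENNReal.toReal_one]
          exact ENNReal.toReal_strict_mono (by simp) h
        · exact absurd h h1
      have key : ∀ n, k ≤ n →
          (∫ s, ∏ i : Fin k, (if h : (i : ℕ) < n then φ i (s ⟨i, h⟩) else 1)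
            ∂ (Measure.pi fun _ : Fin n => (ρ : Measure Bool)).bind (flipKernel n))
          = p ^ n * (∏ i, φ i false) + (1 - p ^ n) * (∏ i, φ i true) := by
        intro n hn
        rw [integral_bind_flip, pi_mass _ n, prodk hn φ false, prodk hn φ true,
          ENNReal.toReal_pow]
      have hpow : Tendsto (fun n : ℕ => p ^ n) atTop (𝓝 0) :=
        tendsto_pow_atTop_nhds_zero_of_lt_one hp0 hp1
      have lim : Tendsto (fun n : ℕ =>
          p ^ n * (∏ i, φ i false) + (1 - p ^ n) * (∏ i, φ i true)) atTop
          (𝓝 (∏ i, φ i true)) := by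
        have := (hpow.mul_const (∏ i, φ i false)).add
          (((tendsto_const_nhds (x := (1 : ℝ))).sub hpow).mul_const (∏ i, φ i true))
        simpa using this
      have hd : (∏ i : Fin k, ∫ x, φ i x ∂(Measure.dirac true : Measure Bool))
          = ∏ i, φ i true := Finset.prod_congr rfl fun i _ => integral_dirac _ _
      show Tendsto _ atTop (𝓝 (∏ i : Fin k, ∫ x, φ i x ∂(Measure.dirac true : Measure Bool)))
      rw [hd]
      exact lim.congr' (by filter_upwards [eventually_atTop.2 ⟨k, key⟩] with n h using h.symm)
  · -- Part (b)
    refine ⟨fun n => ⟨rhoB n, rhoB_prob n⟩, fun n π => rhoB_symm n π, ?_, ?_⟩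
    · -- δ(0)-chaotic
      intro k φ
      set P0 : ℝ := ∏ i, φ i false with hP0
      set C : ℝ := ∑ j ∈ Finset.range k, ∏ i : Fin k, φ i (decide ((i : ℕ) = j)) with hC
      have key : ∀ n, max 1 k ≤ n →
          (∫ s, ∏ i : Fin k, (if h : (i : ℕ) < n then φ i (s ⟨i, h⟩) else 1) ∂ (rhoB n))
          = 2⁻¹ * P0 + (2 * (n : ℝ))⁻¹ * (C + ((n : ℝ) - k) * P0) := by
        intro n hn
        have hn1 : n ≠ 0 := by omega
        have hkn : k ≤ n := le_trans (le_max_right 1 k) hn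
        rw [rhoB_integral n hn1, prodk hkn φ false]
        congr 1
        congr 1
        rw [Finset.sum_congr rfl (fun j _ => eVec_prod hkn φ j), eVec_sum hkn φ]
      have hd : (∏ i : Fin k, ∫ x, φ i x ∂(Measure.dirac false : Measure Bool)) = P0 :=
        Finset.prod_congr rfl fun i _ => integral_dirac _ _
      show Tendsto _ atTop (𝓝 (∏ i : Fin k, ∫ x, φ i x ∂(Measure.dirac false : Measure Bool)))
      rw [hd]
      exact (tendLim P0 C k).congr'
        (by filter_upwards [eventually_atTop.2 ⟨max 1 k, key⟩] with n h using h.symm)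
    · -- not chaotic after the kernel step
      rintro ⟨τ, hτ⟩
      have himg : ∀ (k : ℕ) (φ : Fin k → (Bool →ᵇ ℝ)) (n : ℕ), k ≤ n → n ≠ 0 →
          (∫ s, ∏ i : Fin k, (if h : (i : ℕ) < n then φ i (s ⟨i, h⟩) else 1)
            ∂ ((rhoB n).bind (flipKernel n)))
          = 2⁻¹ * (∏ i, φ i false) + 2⁻¹ * (∏ i, φ i true) := by
        intro k φ n hkn hn
        rw [integral_bind_flip, rhoB_mass n hn, prodk hkn φ false, prodk hkn φ true]
        norm_num
      have h1 : ∫ x, chi x ∂(τ : Measure Bool) = 2⁻¹ := by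
        have := hτ 1 (fun _ => chi)
        have hconst : Tendsto (fun n : ℕ =>
            ∫ s, ∏ i : Fin 1, (if h : (i : ℕ) < n then chi (s ⟨i, h⟩) else 1)
              ∂ ((rhoB n).bind (flipKernel n))) atTop (𝓝 (2⁻¹)) := by
          refine tendsto_const_nhds.congr' ?_
          filter_upwards [eventually_atTop.2 ⟨1, fun n hn => hn⟩] with n hn
          rw [himg 1 (fun _ => chi) n hn (by omega)]
          simp [chi_false, chi_true]
        have h1' := tendsto_nhds_unique hconst this
        rw [Fin.prod_univ_one] at h1'
        exact h1'.symm
      have h2 : False := by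
        have := hτ 2 (fun _ => chi)
        have hconst : Tendsto (fun n : ℕ =>
            ∫ s, ∏ i : Fin 2, (if h : (i : ℕ) < n then chi (s ⟨i, h⟩) else 1)
              ∂ ((rhoB n).bind (flipKernel n))) atTop (𝓝 (2⁻¹)) := by
          refine tendsto_const_nhds.congr' ?_
          filter_upwards [eventually_atTop.2 ⟨2, fun n hn => hn⟩] with n hn
          rw [himg 2 (fun _ => chi) n hn (by omega)]
          simp [chi_false, chi_true]
        have huniq := tendsto_nhds_unique hconst this
        rw [Fin.prod_univ_two, h1] at huniq
        norm_num at huniq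
      exact h2
end
end
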